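/- arXiv:0905.0380 — 10 statements merged into one kernel-verified Lean document; each statement's English description precedes it below -/
import Mathlib

section
/- Let G be a finite group and let H and H' be subgroups of G. Then the following are equivalent: (1) for all conjugation-stable subsets S and T of G one has ⟨H ∩ S⟩ = ⟨H ∩ T⟩ if and only if ⟨H' ∩ S⟩ = ⟨H' ∩ T⟩; (2) for every length map m on G, the jump sets of the filtrations induced by the restrictions of m to H and to H' coincide, i.e. Jump(Fil_m^• H) = Jump(Fil_m^• H'). -/
/-- A subset `S` of a group is conjugation-stable if `gSg⁻¹ = S` for all `g`. -/
def ConjStable {G : Type*} [Group G] (S : Set G) : Prop :=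
  ∀ g : G, (fun x => g * x * g⁻¹) '' S = S

/-- `m : G → ℝ` is a length map: positive away from `1`, conjugation invariant,
and `m (g ^ k) ≤ |k| * m g`.  (Nonnegativity records that `m` takes values in `ℝ≥0`.) -/
structure IsLengthMap {G : Type*} [Group G] (m : G → ℝ) : Prop where
  nonneg : ∀ g : G, 0 ≤ m g
  pos : ∀ g : G, g ≠ 1 → 0 < m g
  conj_invariant : ∀ g h : G, m (h * g * h⁻¹) = m g
  pow_le : ∀ (k : ℤ) (g : G), m (g ^ k) ≤ |(k : ℝ)| * m g

/-- `Fil m δ` is the subgroup generated by the elements of length `< δ`. -/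
def Fil {G : Type*} [Group G] (m : G → ℝ) (δ : ℝ) : Subgroup G :=
  Subgroup.closure {g : G | m g < δ}

/-- The jump set of the filtration induced by a length map `m`. -/
def JumpSet {G : Type*} [Group G] (m : G → ℝ) : Set ℝ :=
  {δ : ℝ | 0 < δ ∧ ∀ ε : ℝ, δ < ε → Fil m δ ≠ Fil m ε}

/-- Subgroups `H, H'` of `G` are jump equivalent if for all conjugation-stable
subsets `S, T` of `G`, `⟨H ∩ S⟩ = ⟨H ∩ T⟩ ↔ ⟨H' ∩ S⟩ = ⟨H' ∩ T⟩`. -/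
def JumpEquivalent {G : Type*} [Group G] (H H' : Subgroup G) : Prop :=
  ∀ S T : Set G, ConjStable S → ConjStable T →
    (Subgroup.closure ((H : Set G) ∩ S) = Subgroup.closure ((H : Set G) ∩ T) ↔
     Subgroup.closure ((H' : Set G) ∩ S) = Subgroup.closure ((H' : Set G) ∩ T))


section A
variable {G : Type*} [Group G]



lemma ConjStable.mem_iff {S : Set G} (hS : ConjStable S) (g h : G) :
    h * g * h⁻¹ ∈ S ↔ g ∈ S := by
  constructor
  · intro hx
    rw [← hS h⁻¹]
    exact ⟨h * g * h⁻¹, hx, by group⟩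
  · intro hx
    rw [← hS h]
    exact ⟨g, hx, rfl⟩

lemma conjStable_of_mem_iff {S : Set G} (h : ∀ g h : G, h * g * h⁻¹ ∈ S ↔ g ∈ S) :
    ConjStable S := by
  intro g
  ext x
  constructor
  · rintro ⟨y, hy, rfl⟩
    exact (h y g).mpr hy
  · intro hx
    have e : g * (g⁻¹ * x * g) * g⁻¹ = x := by group
    exact ⟨g⁻¹ * x * g, (h _ g).mp (by rw [e]; exact hx), by group⟩

lemma conjEqOne (g h : G) : h * g * h⁻¹ = 1 ↔ g = 1 := by
  constructor
  · intro e
    have := congrArg (fun x => h⁻¹ * x * h) e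
    calc g = h⁻¹ * (h * g * h⁻¹) * h := by group
    _ = h⁻¹ * 1 * h := this
    _ = 1 := by group
  · rintro rfl; group

lemma closure_diff_one (X : Set G) :
    Subgroup.closure (X \ {1}) = Subgroup.closure X := by
  apply le_antisymm (Subgroup.closure_mono Set.diff_subset)
  rw [Subgroup.closure_le]
  intro x hx
  by_cases hx1 : x = 1
  · subst hx1; exact Subgroup.one_mem _
  · exact Subgroup.subset_closure ⟨hx, hx1⟩

lemma closure_union_inv (X : Set G) :
    Subgroup.closure (X ∪ X⁻¹) = Subgroup.closure X := by
  rw [Subgroup.closure_union, Subgroup.closure_inv, sup_idem]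

lemma closure_union_one (X : Set G) :
    Subgroup.closure ({1} ∪ X) = Subgroup.closure X := by
  rw [Subgroup.closure_union, Subgroup.closure_singleton_one, bot_sup_eq]



variable {G : Type*} [Group G]

lemma fil_eq_iff (H : Subgroup G) (m : G → ℝ) (δ ε : ℝ) :
    (Fil (fun h : H => m h) δ = Fil (fun h : H => m h) ε ↔
    Subgroup.closure ((H : Set G) ∩ {g | m g < δ}) =
      Subgroup.closure ((H : Set G) ∩ {g | m g < ε})) := by
  have himg : ∀ c : ℝ, H.subtype '' {h : H | m h < c} = (H : Set G) ∩ {g | m g < c} := by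
    intro c
    ext x
    constructor
    · rintro ⟨⟨y, hy⟩, hm, rfl⟩
      exact ⟨hy, hm⟩
    · rintro ⟨hxH, hm⟩
      exact ⟨⟨x, hxH⟩, hm, rfl⟩
  rw [← (Subgroup.map_injective H.subtype_injective).eq_iff]
  show (Subgroup.closure {h : H | m h < δ}).map H.subtype =
      (Subgroup.closure {h : H | m h < ε}).map H.subtype ↔ _
  rw [MonoidHom.map_closure, MonoidHom.map_closure, himg, himg]

lemma conjEqOne' (g h : G) : h * g * h⁻¹ = 1 ↔ g = 1 := by
  constructor
  · intro e
    have := congrArg (fun x => h⁻¹ * x * h) e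
    calc g = h⁻¹ * (h * g * h⁻¹) * h := by group
    _ = h⁻¹ * 1 * h := this
    _ = 1 := by group
  · rintro rfl; group

-- Auxiliary length map distinguishing `U` (length 1) and `V` (length 3/2).
open Classical in
noncomputable def lmap (U V : Set G) (g : G) : ℝ :=
  if g = 1 then 0 else if g ∈ U then 1 else if g ∈ V then 3/2 else 2

structure GoodSet (U : Set G) : Prop where
  conj : ∀ g h : G, h * g * h⁻¹ ∈ U ↔ g ∈ U
  inv : ∀ g : G, g⁻¹ ∈ U ↔ g ∈ U

open Classical in
lemma lmap_nonneg (U V : Set G) (g : G) : 0 ≤ lmap U V g := by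
  unfold lmap; split_ifs <;> norm_num

open Classical in
lemma lmap_le_two (U V : Set G) (g : G) : lmap U V g ≤ 2 := by
  unfold lmap; split_ifs <;> norm_num

open Classical in
lemma lmap_one (U V : Set G) : lmap U V (1 : G) = 0 := by simp [lmap]

open Classical in
lemma lmap_ge_one (U V : Set G) {g : G} (hg : g ≠ 1) : 1 ≤ lmap U V g := by
  unfold lmap; split_ifs <;> norm_num
  exact absurd ‹g = 1› hg

open Classical in
lemma lmap_inv (U V : Set G) (hU : GoodSet U) (hV : GoodSet V) (g : G) :
    lmap U V g⁻¹ = lmap U V g := by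
  unfold lmap
  simp only [inv_eq_one, hU.inv, hV.inv]

lemma lmap_isLengthMap (U V : Set G) (hU : GoodSet U) (hV : GoodSet V) :
    IsLengthMap (lmap U V) where
  nonneg := lmap_nonneg U V
  pos g hg := lt_of_lt_of_le one_pos (lmap_ge_one U V hg)
  conj_invariant g h := by
    show lmap U V _ = lmap U V _
    unfold lmap
    have e1 : (h*g*h⁻¹ = 1) ↔ (g = 1) := conjEqOne' g h
    by_cases h1 : g = 1
    · simp [h1, e1.mpr h1]
    · have h1' : ¬ (h*g*h⁻¹ = 1) := fun e => h1 (e1.mp e)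
      rw [if_neg h1, if_neg h1']
      by_cases h2 : g ∈ U
      · rw [if_pos ((hU.conj g h).mpr h2), if_pos h2]
      · rw [if_neg (fun e => h2 ((hU.conj g h).mp e)), if_neg h2]
        by_cases h3 : g ∈ V
        · rw [if_pos ((hV.conj g h).mpr h3), if_pos h3]
        · rw [if_neg (fun e => h3 ((hV.conj g h).mp e)), if_neg h3]
  pow_le k g := by
    by_cases hg : g = 1
    · subst hg; rw [one_zpow, lmap_one]; simp
    by_cases hgk : g ^ k = 1
    · rw [hgk, lmap_one]
      exact mul_nonneg (abs_nonneg _) (lmap_nonneg U V g)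
    have h1 : (1:ℝ) ≤ lmap U V g := lmap_ge_one U V hg
    rcases eq_or_ne k 1 with rfl | hk1
    · simp
    rcases eq_or_ne k (-1) with rfl | hkm1
    · rw [zpow_neg_one, lmap_inv U V hU hV]
      simp
    have hk0 : k ≠ 0 := by rintro rfl; simp at hgk
    have h2 : (2:ℤ) ≤ |k| := by
      rcases le_or_gt 0 k with h | h
      · rw [abs_of_nonneg h]; omega
      · rw [abs_of_neg h]; omega
    have h2' : (2:ℝ) ≤ |(k:ℝ)| := by
      rw [← Int.cast_abs]; exact_mod_cast h2
    calc lmap U V (g ^ k) ≤ 2 := lmap_le_two U V _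
      _ = 2 * 1 := by ring
      _ ≤ |(k:ℝ)| * lmap U V g := by
          apply mul_le_mul h2' h1 (by norm_num) (abs_nonneg _)


end A

section Aux3
variable {G : Type*} [Group G]

open Classical in
lemma lmap_lt_32 (U V : Set G) : {g : G | lmap U V g < 3/2} = {1} ∪ U := by
  ext g
  simp only [Set.mem_setOf_eq, Set.mem_union, Set.mem_singleton_iff]
  unfold lmap
  split_ifs with h1 h2 h3 <;> norm_num <;> tauto

open Classical in
lemma lmap_lt_mid (U V : Set G) {ε : ℝ} (hε1 : 3/2 < ε) (hε2 : ε ≤ 2) :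
    {g : G | lmap U V g < ε} = ({1} ∪ U) ∪ V := by
  ext g
  simp only [Set.mem_setOf_eq, Set.mem_union, Set.mem_singleton_iff]
  unfold lmap
  split_ifs with h1 h2 h3 <;>
    (constructor <;> intro _ <;> first | tauto | linarith)

lemma lmap_lt_univ (U V : Set G) {ε : ℝ} (hε : 2 < ε) :
    {g : G | lmap U V g < ε} = Set.univ := by
  ext g
  simp only [Set.mem_setOf_eq, Set.mem_univ, iff_true]
  exact lt_of_le_of_lt (lmap_le_two U V g) hε

lemma closure_inter_union_one (H : Subgroup G) (X : Set G) :
    Subgroup.closure ((H : Set G) ∩ ({1} ∪ X)) = Subgroup.closure ((H : Set G) ∩ X) := by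
  rw [Set.inter_union_distrib_left]
  have h1 : (H : Set G) ∩ {1} = {1} := by
    ext x
    simp only [Set.mem_inter_iff, Set.mem_singleton_iff, SetLike.mem_coe,
      and_iff_right_iff_imp]
    rintro rfl; exact H.one_mem
  rw [h1, closure_union_one]

lemma jump_char (H : Subgroup G) (U V : Set G) :
    ((3/2 : ℝ) ∈ JumpSet (fun h : H => lmap U V h)) ↔
      Subgroup.closure ((H : Set G) ∩ U) ⊔ Subgroup.closure ((H : Set G) ∩ V) ≠
        Subgroup.closure ((H : Set G) ∩ U) := by
  set A := Subgroup.closure ((H : Set G) ∩ U) with hA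
  set B := Subgroup.closure ((H : Set G) ∩ V) with hB
  have hA32 : Subgroup.closure ((H : Set G) ∩ {g : G | lmap U V g < 3/2}) = A := by
    rw [lmap_lt_32, closure_inter_union_one]
  have hABε : ∀ ε : ℝ, 3/2 < ε → ε ≤ 2 →
      Subgroup.closure ((H : Set G) ∩ {g : G | lmap U V g < ε}) = A ⊔ B := by
    intro ε h1 h2
    rw [lmap_lt_mid U V h1 h2, Set.inter_union_distrib_left, Subgroup.closure_union,
      closure_inter_union_one]
  have hBH : B ≤ H := by
    rw [hB]
    exact (Subgroup.closure_le H).mpr Set.inter_subset_left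
  constructor
  · rintro ⟨-, h⟩ heq
    exact h 2 (by norm_num)
      ((fil_eq_iff H (lmap U V) (3/2) 2).mpr
        (by rw [hA32, hABε 2 (by norm_num) le_rfl]; exact heq.symm))
  · intro hne
    refine ⟨by norm_num, fun ε hε => ?_⟩
    rw [Ne, fil_eq_iff, hA32]
    rcases le_or_gt ε 2 with h2 | h2
    · rw [hABε ε hε h2]
      exact fun e => hne e.symm
    · rw [lmap_lt_univ U V h2, Set.inter_univ, Subgroup.closure_eq]
      intro e
      exact hne (sup_eq_left.mpr (hBH.trans e.ge))

lemma tilde_good {S : Set G} (hS : ConjStable S) : GoodSet ((S ∪ S⁻¹) \ {1}) := by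
  constructor
  · intro g h
    simp only [Set.mem_diff, Set.mem_union, Set.mem_inv, Set.mem_singleton_iff]
    have h1 : (h * g * h⁻¹)⁻¹ = h * g⁻¹ * h⁻¹ := by group
    rw [h1, hS.mem_iff, hS.mem_iff, conjEqOne']
  · intro g
    simp only [Set.mem_diff, Set.mem_union, Set.mem_inv, Set.mem_singleton_iff, inv_inv,
      inv_eq_one]
    tauto

lemma tilde_closure (K : Subgroup G) (S : Set G) :
    Subgroup.closure ((K : Set G) ∩ ((S ∪ S⁻¹) \ {1})) =
      Subgroup.closure ((K : Set G) ∩ S) := by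
  have hset : (K : Set G) ∩ ((S ∪ S⁻¹) \ {1}) =
      (((K : Set G) ∩ S) ∪ ((K : Set G) ∩ S)⁻¹) \ {1} := by
    ext x
    simp only [Set.mem_inter_iff, Set.mem_diff, Set.mem_union, Set.mem_inv,
      Set.mem_singleton_iff, SetLike.mem_coe]
    constructor
    · rintro ⟨hK, hm, hne⟩
      exact ⟨hm.imp (fun h => ⟨hK, h⟩) (fun h => ⟨K.inv_mem hK, h⟩), hne⟩
    · rintro ⟨hm, hne⟩
      rcases hm with ⟨hK, h⟩ | ⟨hK, h⟩
      · exact ⟨hK, Or.inl h, hne⟩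
      · exact ⟨by simpa using K.inv_mem hK, Or.inr h, hne⟩
  rw [hset, closure_diff_one, closure_union_inv]

lemma lattice_aux {α : Type*} [SemilatticeSup α] {a b a' b' : α}
    (e1 : (a ⊔ b ≠ a) ↔ (a' ⊔ b' ≠ a')) (e2 : (b ⊔ a ≠ b) ↔ (b' ⊔ a' ≠ b')) :
    a = b ↔ a' = b' := by
  have h : ∀ x y : α, x = y ↔ (¬(x ⊔ y ≠ x) ∧ ¬(y ⊔ x ≠ y)) := by
    intro x y
    rw [not_not, not_not, sup_eq_left, sup_eq_left]
    exact ⟨fun h => ⟨h.ge, h.le⟩, fun ⟨h1, h2⟩ => le_antisymm h2 h1⟩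
  rw [h a b, h a' b', e1, e2]

end Aux3


/-- for a finite group `G` and subgroups `H`, `H'`, jump equivalence of `H` and
`H'` is equivalent to: for every length map `m` on `G`, the jump sets of the filtrations of
`H` and `H'` induced by the restrictions of `m` coincide. -/
theorem jumpEquivalent_iff_forall_lengthMap_jumpSet_eq
    {G : Type*} [Group G] [Finite G] (H H' : Subgroup G) :
    JumpEquivalent H H' ↔
      ∀ m : G → ℝ, IsLengthMap m →
        JumpSet (fun h : H => m h) = JumpSet (fun h : H' => m h) := by
  constructor
  · intro hJE m hm
    have hconj : ∀ δ : ℝ, ConjStable {g : G | m g < δ} := by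
      intro δ
      apply conjStable_of_mem_iff
      intro g h
      simp only [Set.mem_setOf_eq, hm.conj_invariant]
    ext δ
    simp only [JumpSet, Set.mem_setOf_eq]
    have key : ∀ ε : ℝ, (Fil (fun h : H => m h) δ = Fil (fun h : H => m h) ε) ↔
        (Fil (fun h : H' => m h) δ = Fil (fun h : H' => m h) ε) := by
      intro ε
      rw [fil_eq_iff, fil_eq_iff]
      exact hJE _ _ (hconj δ) (hconj ε)
    constructor
    · rintro ⟨h0, h⟩
      exact ⟨h0, fun ε hε e => h ε hε ((key ε).mpr e)⟩
    · rintro ⟨h0, h⟩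
      exact ⟨h0, fun ε hε e => h ε hε ((key ε).mp e)⟩
  · intro hJ S T hS hT
    set U := (S ∪ S⁻¹) \ {1} with hUdef
    set V := (T ∪ T⁻¹) \ {1} with hVdef
    have hU : GoodSet U := tilde_good hS
    have hV : GoodSet V := tilde_good hT
    have h1 := hJ (lmap U V) (lmap_isLengthMap U V hU hV)
    have h2 := hJ (lmap V U) (lmap_isLengthMap V U hV hU)
    have e1 : ((3/2 : ℝ) ∈ JumpSet (fun h : H => lmap U V h)) ↔
        ((3/2 : ℝ) ∈ JumpSet (fun h : H' => lmap U V h)) := by rw [h1]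
    have e2 : ((3/2 : ℝ) ∈ JumpSet (fun h : H => lmap V U h)) ↔
        ((3/2 : ℝ) ∈ JumpSet (fun h : H' => lmap V U h)) := by rw [h2]
    rw [jump_char, jump_char] at e1
    rw [jump_char, jump_char] at e2
    rw [← tilde_closure H S, ← tilde_closure H T, ← tilde_closure H' S, ← tilde_closure H' T]
    exact lattice_aux e1 e2
end

section
/- Let G be a finite group and let H and H' be subgroups of G. If H and H' are order equivalent in G, then H and H' are jump equivalent in G. -/
/-- Subgroups `H, H'` of `G` are order equivalent if `#⟨H ∩ S⟩ = #⟨H' ∩ S⟩` for every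
conjugation-stable subset `S` of `G`. -/
def OrderEquivalent {G : Type*} [Group G] (H H' : Subgroup G) : Prop :=
  ∀ S : Set G, ConjStable S →
    Nat.card (Subgroup.closure ((H : Set G) ∩ S)) =
      Nat.card (Subgroup.closure ((H' : Set G) ∩ S))

/-- Subgroups `H, H'` of `G` are Gassmann-Sunada equivalent if `#(H ∩ S) = #(H' ∩ S)` for
every conjugation-stable subset `S` of `G`. -/
def GassmannEquivalent {G : Type*} [Group G] (H H' : Subgroup G) : Prop :=
  ∀ S : Set G, ConjStable S →
    Set.ncard ((H : Set G) ∩ S) = Set.ncard ((H' : Set G) ∩ S)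

/-- Subgroups `H, H'` of `G` are Kronecker equivalent if for every conjugation-stable subset
`S` of `G`, `H ∩ S = ∅ ↔ H' ∩ S = ∅`. -/
def KroneckerEquivalent {G : Type*} [Group G] (H H' : Subgroup G) : Prop :=
  ∀ S : Set G, ConjStable S → ((H : Set G) ∩ S = ∅ ↔ (H' : Set G) ∩ S = ∅)

/-- in a finite group, order equivalent subgroups are jump equivalent. -/
theorem jumpEquivalent_of_orderEquivalent {G : Type*} [Group G] [Finite G]
    (H H' : Subgroup G) (h : OrderEquivalent H H') : JumpEquivalent H H' := by
  intro S T hS hT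
  have hU : ConjStable (S ∪ T) := by
    intro g; rw [Set.image_union, hS g, hT g]
  have key : ∀ K : Subgroup G,
      Subgroup.closure ((K : Set G) ∩ S) = Subgroup.closure ((K : Set G) ∩ T) ↔
      (Nat.card (Subgroup.closure ((K : Set G) ∩ S)) =
        Nat.card (Subgroup.closure ((K : Set G) ∩ (S ∪ T))) ∧
       Nat.card (Subgroup.closure ((K : Set G) ∩ T)) =
        Nat.card (Subgroup.closure ((K : Set G) ∩ (S ∪ T)))) := by
    intro K
    have hdist : (K : Set G) ∩ (S ∪ T) = ((K : Set G) ∩ S) ∪ ((K : Set G) ∩ T) :=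
      Set.inter_union_distrib_left _ _ _
    have hUeq : Subgroup.closure ((K : Set G) ∩ (S ∪ T)) =
        Subgroup.closure ((K : Set G) ∩ S) ⊔ Subgroup.closure ((K : Set G) ∩ T) := by
      rw [hdist, Subgroup.closure_union]
    have leS : Subgroup.closure ((K : Set G) ∩ S) ≤
        Subgroup.closure ((K : Set G) ∩ (S ∪ T)) :=
      Subgroup.closure_mono (by rw [hdist]; exact Set.subset_union_left)
    have leT : Subgroup.closure ((K : Set G) ∩ T) ≤
        Subgroup.closure ((K : Set G) ∩ (S ∪ T)) :=
      Subgroup.closure_mono (by rw [hdist]; exact Set.subset_union_right)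
    constructor
    · intro heq
      have hES : Subgroup.closure ((K : Set G) ∩ (S ∪ T)) =
          Subgroup.closure ((K : Set G) ∩ S) := by
        rw [hUeq, ← heq, sup_idem]
      exact ⟨by rw [hES], by rw [hES, heq]⟩
    · rintro ⟨h1, h2⟩
      have eS := Subgroup.eq_of_le_of_card_ge leS (le_of_eq h1.symm)
      have eT := Subgroup.eq_of_le_of_card_ge leT (le_of_eq h2.symm)
      rw [eS, eT]
  rw [key H, key H', h S hS, h T hT, h (S ∪ T) hU]
end

section
/- Let G be a finite group and let H and H' be subgroups of G. If H and H' are jump equivalent in G, then H and H' are Kronecker equivalent in G. -/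
lemma key {G : Type*} [Group G] (H H' : Subgroup G) (h : JumpEquivalent H H')
    (S : Set G) (hS : ConjStable S) (hHS : (H : Set G) ∩ S = ∅) :
    (H' : Set G) ∩ S = ∅ := by
  have h1 : (1 : G) ∉ S := fun hm => Set.eq_empty_iff_forall_notMem.mp hHS 1 ⟨H.one_mem, hm⟩
  have hT : ConjStable (∅ : Set G) := fun g => by simp
  have hcl : Subgroup.closure ((H' : Set G) ∩ S) = ⊥ := by
    have := (h S ∅ hS hT).mp (by rw [hHS]; simp)
    simpa using this
  ext x
  simp only [Set.mem_inter_iff, Set.mem_empty_iff_false, iff_false, not_and]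
  intro hx hxS
  have : x ∈ Subgroup.closure ((H' : Set G) ∩ S) :=
    Subgroup.subset_closure ⟨hx, hxS⟩
  rw [hcl, Subgroup.mem_bot] at this
  exact h1 (this ▸ hxS)

/-- in a finite group, jump equivalent subgroups are Kronecker equivalent. -/
theorem kroneckerEquivalent_of_jumpEquivalent {G : Type*} [Group G] [Finite G]
    (H H' : Subgroup G) (h : JumpEquivalent H H') : KroneckerEquivalent H H' := by
  have hsymm : JumpEquivalent H' H := fun S T hS hT => (h S T hS hT).symm
  intro S hS
  exact ⟨key H H' h S hS, key H' H hsymm S hS⟩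
end

section
/- Let e₁, …, e₅ be pairwise orthogonal vectors in a real inner product space with 1 ≤ ‖e₁‖ < ‖e₂‖ < ‖e₃‖ < ‖e₄‖ < ‖e₅‖ < √5/2. Let L = ℤe₁ + ⋯ + ℤe₅ be the additive group they span, and let m : L → ℝ≥0 be the length map m(l) = ‖l‖. Then Jump(Fil_m^• L) = {‖e₁‖, ‖e₂‖, ‖e₃‖, ‖e₄‖, ‖e₅‖}. Moreover, setting v = (e₁ + e₂ + e₃ + e₄ + e₅)/2 and L' = L + ℤv, every element of L' not lying in L has norm at least √5/2, and Jump(Fil_m^• L') = {‖e₁‖, ‖e₂‖, ‖e₃‖, ‖e₄‖, ‖e₅‖, ‖v‖}. -/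
open scoped RealInnerProductSpace

/-- `AddFil m δ` is the additive subgroup generated by the elements of length `< δ`. -/
def AddFil {A : Type*} [AddGroup A] (m : A → ℝ) (δ : ℝ) : AddSubgroup A :=
  AddSubgroup.closure {a : A | m a < δ}

/-- The jump set of the filtration induced by a length map `m` on an additive group. -/
def AddJumpSet {A : Type*} [AddGroup A] (m : A → ℝ) : Set ℝ :=
  {δ : ℝ | 0 < δ ∧ ∀ ε : ℝ, δ < ε → AddFil m δ ≠ AddFil m ε}


section AuxJump
variable {E : Type*} [NormedAddCommGroup E] [InnerProductSpace ℝ E]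



lemma aux_inner_closure {w : E} {S : Set E} (hS : ∀ y ∈ S, ⟪w, y⟫ = 0)
    {x : E} (hx : x ∈ AddSubgroup.closure S) : ⟪w, x⟫ = 0 :=
  AddSubgroup.closure_induction (fun y hy => hS y hy) (by simp)
    (fun a b _ _ ha hb => by rw [inner_add_right, ha, hb, add_zero])
    (fun a _ ha => by rw [inner_neg_right, ha, neg_zero]) hx

lemma aux_normsq (e : Fin 5 → E) (horth : ∀ i j : Fin 5, i ≠ j → ⟪e i, e j⟫ = 0)
    (r : Fin 5 → ℝ) : ‖∑ i, r i • e i‖ ^ 2 = ∑ i, (r i) ^ 2 * ‖e i‖ ^ 2 := by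
  rw [← real_inner_self_eq_norm_sq, inner_sum]
  refine Finset.sum_congr rfl fun j _ => ?_
  rw [real_inner_smul_right, sum_inner, Finset.sum_eq_single j]
  · rw [real_inner_smul_left, real_inner_self_eq_norm_sq]; ring
  · intro i _ hij
    rw [real_inner_smul_left, horth i j hij, mul_zero]
  · simp

lemma aux_coord (e : Fin 5 → E) (horth : ∀ i j : Fin 5, i ≠ j → ⟪e i, e j⟫ = 0)
    (r : Fin 5 → ℝ) (j : Fin 5) : ⟪e j, ∑ i, r i • e i⟫ = r j * ‖e j‖ ^ 2 := by
  rw [inner_sum, Finset.sum_eq_single j]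
  · rw [real_inner_smul_right, real_inner_self_eq_norm_sq]
  · intro i _ hij
    rw [real_inner_smul_right, horth j i (Ne.symm hij), mul_zero]
  · simp



lemma aux_single (e : Fin 5 → E) (i : Fin 5) :
    ∑ j, ((if j = i then (1:ℤ) else 0 : ℤ) : ℝ) • e j = e i := by
  rw [Finset.sum_eq_single i] <;> simp +contextual

lemma aux_memL (e : Fin 5 → E) {x : E} (hx : x ∈ AddSubgroup.closure (Set.range e)) :
    ∃ c : Fin 5 → ℤ, x = ∑ i, (c i : ℝ) • e i := by
  induction hx using AddSubgroup.closure_induction with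
  | mem y hy =>
    obtain ⟨i, rfl⟩ := hy
    exact ⟨fun j => if j = i then 1 else 0, (aux_single e i).symm⟩
  | zero => exact ⟨0, by simp⟩
  | add a b _ _ iha ihb =>
    obtain ⟨c, rfl⟩ := iha; obtain ⟨d, rfl⟩ := ihb
    exact ⟨c + d, by push_cast; simp [add_smul, Finset.sum_add_distrib]⟩
  | neg a _ iha =>
    obtain ⟨c, rfl⟩ := iha
    exact ⟨-c, by push_cast; simp [neg_smul, Finset.sum_neg_distrib]⟩

lemma aux_memL_rev (e : Fin 5 → E) (c : Fin 5 → ℤ) :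
    ∑ i, (c i : ℝ) • e i ∈ AddSubgroup.closure (Set.range e) :=
  sum_mem fun i _ => by
    rw [Int.cast_smul_eq_zsmul]
    exact zsmul_mem (AddSubgroup.subset_closure (Set.mem_range_self i)) _

lemma aux_memL2 (e : Fin 5 → E) (v : E) {x : E}
    (hx : x ∈ AddSubgroup.closure (insert v (Set.range e))) :
    ∃ (c : Fin 5 → ℤ) (k : ℤ), x = (∑ i, (c i : ℝ) • e i) + (k : ℝ) • v := by
  induction hx using AddSubgroup.closure_induction with
  | mem y hy =>
    rcases hy with rfl | ⟨i, rfl⟩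
    · exact ⟨0, 1, by simp⟩
    · exact ⟨fun j => if j = i then 1 else 0, 0, by rw [aux_single e i]; simp⟩
  | zero => exact ⟨0, 0, by simp⟩
  | add a b _ _ iha ihb =>
    obtain ⟨c, k, rfl⟩ := iha; obtain ⟨d, l, rfl⟩ := ihb
    refine ⟨c + d, k + l, ?_⟩
    push_cast
    simp only [Pi.add_apply, Int.cast_add, add_smul, Finset.sum_add_distrib]
    abel
  | neg a _ iha =>
    obtain ⟨c, k, rfl⟩ := iha
    refine ⟨-c, -k, ?_⟩
    push_cast
    simp only [Pi.neg_apply, Int.cast_neg, neg_smul, neg_add_rev, ← Finset.sum_neg_distrib]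
    abel



lemma aux_filL (e : Fin 5 → E) (horth : ∀ i j : Fin 5, i ≠ j → ⟪e i, e j⟫ = 0)
    {x : E} {δ : ℝ} (hx : x ∈ AddSubgroup.closure (Set.range e)) (hn : ‖x‖ < δ) :
    x ∈ AddSubgroup.closure (e '' {i | ‖e i‖ < δ}) := by
  obtain ⟨c, rfl⟩ := aux_memL e hx
  refine sum_mem fun i _ => ?_
  rcases eq_or_ne (c i) 0 with h | h
  · rw [h]; simp only [Int.cast_zero, zero_smul]; exact zero_mem _
  · rw [Int.cast_smul_eq_zsmul]
    have habs : (1:ℝ) ≤ |(c i : ℝ)| := by exact_mod_cast Int.one_le_abs h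
    have h1 : ‖e i‖ ^ 2 ≤ ‖∑ j, (c j : ℝ) • e j‖ ^ 2 := by
      rw [aux_normsq e horth]
      have hc2 : (1:ℝ) ≤ (c i : ℝ) ^ 2 := by nlinarith [sq_abs ((c i : ℝ))]
      calc ‖e i‖ ^ 2 ≤ (c i : ℝ) ^ 2 * ‖e i‖ ^ 2 := by nlinarith [sq_nonneg (‖e i‖)]
        _ ≤ ∑ j, (c j : ℝ) ^ 2 * ‖e j‖ ^ 2 :=
            Finset.single_le_sum (f := fun j => ((c j : ℝ)) ^ 2 * ‖e j‖ ^ 2)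
              (fun j _ => by positivity) (Finset.mem_univ i)
    have hlt : ‖e i‖ < δ := by
      nlinarith [norm_nonneg (e i), norm_nonneg (∑ j, (c j : ℝ) • e j)]
    exact zsmul_mem (AddSubgroup.subset_closure (Set.mem_image_of_mem e hlt)) _

lemma aux_FL (e : Fin 5 → E) (horth : ∀ i j : Fin 5, i ≠ j → ⟪e i, e j⟫ = 0) (δ : ℝ) :
    AddSubgroup.closure {x : E | x ∈ AddSubgroup.closure (Set.range e) ∧ ‖x‖ < δ}
      = AddSubgroup.closure (e '' {i | ‖e i‖ < δ}) := by
  apply le_antisymm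
  · rw [AddSubgroup.closure_le]
    rintro x ⟨hx, hn⟩
    exact aux_filL e horth hx hn
  · apply AddSubgroup.closure_mono
    rintro y ⟨i, hi, rfl⟩
    exact ⟨AddSubgroup.subset_closure (Set.mem_range_self i), hi⟩

lemma aux_sep (e : Fin 5 → E) (horth : ∀ i j : Fin 5, i ≠ j → ⟪e i, e j⟫ = 0)
    (hone : 1 ≤ ‖e 0‖) (hmono : StrictMono fun i : Fin 5 => ‖e i‖)
    {s : Set (Fin 5)} {j : Fin 5} (hj : j ∉ s) :
    e j ∉ AddSubgroup.closure (e '' s) := by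
  intro h
  have h2 := aux_inner_closure (w := e j)
    (fun y hy => by obtain ⟨i, hi, rfl⟩ := hy; exact horth j i fun hji => hj (hji ▸ hi)) h
  rw [real_inner_self_eq_norm_sq] at h2
  have h0 : (1:ℝ) ≤ ‖e j‖ := hone.trans (hmono.monotone (Fin.zero_le j))
  nlinarith

lemma aux_vnotL (e : Fin 5 → E) (horth : ∀ i j : Fin 5, i ≠ j → ⟪e i, e j⟫ = 0)
    (hone : 1 ≤ ‖e 0‖) (v : E) (hv : v = (2 : ℝ)⁻¹ • ∑ i : Fin 5, e i) :
    v ∉ AddSubgroup.closure (Set.range e) := by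
  intro h
  obtain ⟨c, hc⟩ := aux_memL e h
  have hv2 : v = ∑ i, (2:ℝ)⁻¹ • e i := by rw [hv, Finset.smul_sum]
  have h1 := aux_coord e horth (fun _ => (2:ℝ)⁻¹) 0
  have h2 := aux_coord e horth (fun i => (c i : ℝ)) 0
  rw [← hv2] at h1
  rw [← hc] at h2
  have hn : (0:ℝ) < ‖e 0‖ := lt_of_lt_of_le one_pos hone
  have hne : ‖e 0‖ ^ 2 ≠ 0 := by positivity
  have h5 : (c 0 : ℝ) * ‖e 0‖ ^ 2 = 2⁻¹ * ‖e 0‖ ^ 2 := by rw [← h2, h1]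
  have h3 : (c 0 : ℝ) = 2⁻¹ := mul_right_cancel₀ hne h5
  have h4 : (2 * c 0 : ℤ) = 1 := by
    have : (2 * c 0 : ℝ) = 1 := by rw [h3]; norm_num
    exact_mod_cast this
  omega



lemma aux_sqrt5 : (Real.sqrt 5 / 2) ^ 2 = 5 / 4 := by
  rw [div_pow, Real.sq_sqrt] <;> norm_num

lemma aux_le_of_sq {a b : ℝ} (ha : 0 ≤ a) (hb : 0 ≤ b) (h : a ^ 2 ≤ b ^ 2) : a ≤ b := by
  nlinarith

lemma aux_vnormsq (e : Fin 5 → E) (horth : ∀ i j : Fin 5, i ≠ j → ⟪e i, e j⟫ = 0)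
    (v : E) (hv : v = (2 : ℝ)⁻¹ • ∑ i : Fin 5, e i) :
    ‖v‖ ^ 2 = ∑ i, (2:ℝ)⁻¹ ^ 2 * ‖e i‖ ^ 2 := by
  have hv2 : v = ∑ i, (2:ℝ)⁻¹ • e i := by rw [hv, Finset.smul_sum]
  rw [hv2, aux_normsq e horth]

lemma aux_vnorm (e : Fin 5 → E) (horth : ∀ i j : Fin 5, i ≠ j → ⟪e i, e j⟫ = 0)
    (hone : 1 ≤ ‖e 0‖) (hmono : StrictMono fun i : Fin 5 => ‖e i‖)
    (v : E) (hv : v = (2 : ℝ)⁻¹ • ∑ i : Fin 5, e i) :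
    Real.sqrt 5 / 2 ≤ ‖v‖ := by
  have h1 : ∀ i : Fin 5, (1:ℝ) ≤ ‖e i‖ := fun i => hone.trans (hmono.monotone (Fin.zero_le i))
  have h2 : (5/4 : ℝ) ≤ ‖v‖ ^ 2 := by
    rw [aux_vnormsq e horth v hv]
    have : ∀ i : Fin 5, (1/4 : ℝ) ≤ (2:ℝ)⁻¹ ^ 2 * ‖e i‖ ^ 2 := fun i => by nlinarith [h1 i]
    calc (5/4 : ℝ) = ∑ _i : Fin 5, (1/4 : ℝ) := by simp; norm_num
      _ ≤ _ := Finset.sum_le_sum fun i _ => this i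
  refine aux_le_of_sq (by positivity) (norm_nonneg v) ?_
  rw [aux_sqrt5]; exact h2

lemma aux_bound (e : Fin 5 → E) (horth : ∀ i j : Fin 5, i ≠ j → ⟪e i, e j⟫ = 0)
    (hone : 1 ≤ ‖e 0‖) (hmono : StrictMono fun i : Fin 5 => ‖e i‖)
    (v : E) (hv : v = (2 : ℝ)⁻¹ • ∑ i : Fin 5, e i)
    {x : E} (hx : x ∈ AddSubgroup.closure (insert v (Set.range e)))
    (hxL : x ∉ AddSubgroup.closure (Set.range e)) :
    ‖v‖ ≤ ‖x‖ ∧ Real.sqrt 5 / 2 ≤ ‖x‖ := by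
  have h1 : ∀ i : Fin 5, (1:ℝ) ≤ ‖e i‖ := fun i => hone.trans (hmono.monotone (Fin.zero_le i))
  obtain ⟨c, k, rfl⟩ := aux_memL2 e v hx
  -- k must be odd
  have hodd : Odd k := by
    rcases Int.even_or_odd k with ⟨m, rfl⟩ | h
    · exfalso
      apply hxL
      have : (∑ i, (c i : ℝ) • e i) + ((m + m : ℤ) : ℝ) • v = ∑ i, ((c i + m : ℤ) : ℝ) • e i := by
        rw [hv]
        push_cast
        rw [smul_smul, Finset.smul_sum, ← Finset.sum_add_distrib]
        refine Finset.sum_congr rfl fun i _ => ?_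
        rw [add_smul]
        congr 1
        rw [show ((m:ℝ) + m) * 2⁻¹ = (m:ℝ) by ring]
      rw [this]
      exact aux_memL_rev e _
    · exact h
  obtain ⟨m, rfl⟩ := hodd
  have hrep : (∑ i, (c i : ℝ) • e i) + ((2*m+1 : ℤ) : ℝ) • v
      = ∑ i, (((c i : ℝ) + (m : ℝ)) + 2⁻¹) • e i := by
    rw [hv]
    push_cast
    rw [smul_smul, Finset.smul_sum, ← Finset.sum_add_distrib]
    refine Finset.sum_congr rfl fun i _ => ?_
    module
  rw [hrep]
  have hsq : ∀ i : Fin 5, (1/4 : ℝ) ≤ (((c i : ℝ) + (m : ℝ)) + 2⁻¹) ^ 2 := by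
    intro i
    have : ((c i : ℝ) + (m : ℝ)) = ((c i + m : ℤ) : ℝ) := by push_cast; ring
    rw [this]
    set t : ℤ := c i + m
    have ht : 0 ≤ t * (t + 1) := by rcases le_or_gt 0 t with h | h <;> nlinarith
    have ht' : (0:ℝ) ≤ (t:ℝ) * ((t:ℝ) + 1) := by exact_mod_cast ht
    nlinarith
  have hnormsq : ∑ i, (2:ℝ)⁻¹ ^ 2 * ‖e i‖ ^ 2 ≤ ‖∑ i, (((c i : ℝ) + (m : ℝ)) + 2⁻¹) • e i‖ ^ 2 := by
    rw [aux_normsq e horth]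
    refine Finset.sum_le_sum fun i _ => ?_
    have := hsq i
    nlinarith [sq_nonneg (‖e i‖), h1 i]
  constructor
  · refine aux_le_of_sq (norm_nonneg v) (norm_nonneg _) ?_
    rw [aux_vnormsq e horth v hv]
    exact hnormsq
  · refine aux_le_of_sq (by positivity) (norm_nonneg _) ?_
    rw [aux_sqrt5]
    refine le_trans ?_ hnormsq
    have : ∀ i : Fin 5, (1/4 : ℝ) ≤ (2:ℝ)⁻¹ ^ 2 * ‖e i‖ ^ 2 := fun i => by nlinarith [h1 i]
    calc (5/4 : ℝ) = ∑ _i : Fin 5, (1/4 : ℝ) := by simp; norm_num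
      _ ≤ _ := Finset.sum_le_sum fun i _ => this i



-- transfer lemma
lemma aux_transfer (L : AddSubgroup E) (δ ε : ℝ) :
    (AddSubgroup.closure {a : L | ‖(a : E)‖ < δ} = AddSubgroup.closure {a : L | ‖(a : E)‖ < ε}) ↔
    (AddSubgroup.closure {x : E | x ∈ L ∧ ‖x‖ < δ}
      = AddSubgroup.closure {x : E | x ∈ L ∧ ‖x‖ < ε}) := by
  have key : ∀ γ : ℝ, (AddSubgroup.closure {a : L | ‖(a : E)‖ < γ}).map L.subtype
      = AddSubgroup.closure {x : E | x ∈ L ∧ ‖x‖ < γ} := by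
    intro γ
    rw [AddMonoidHom.map_closure]
    congr 1
    ext y
    constructor
    · rintro ⟨⟨x, hx⟩, h, rfl⟩
      exact ⟨hx, h⟩
    · rintro ⟨hy, h⟩
      exact ⟨⟨y, hy⟩, h, rfl⟩
  constructor
  · intro h
    rw [← key, ← key, h]
  · intro h
    exact AddSubgroup.map_injective L.subtype_injective (by rw [key, key, h])

lemma exists_eps (s : Finset ℝ) (δ : ℝ) (hδ : δ ∉ s) :
    ∃ ε : ℝ, δ < ε ∧ ∀ a ∈ s, (a < δ ↔ a < ε) := by
  classical
  set t := s.filter (δ < ·) with ht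
  by_cases hne : t.Nonempty
  · refine ⟨t.min' hne, (Finset.mem_filter.1 (t.min'_mem hne)).2, fun a ha => ?_⟩
    constructor
    · intro h
      exact h.trans (Finset.mem_filter.1 (t.min'_mem hne)).2
    · intro h
      by_contra hle
      push_neg at hle
      have hda : δ < a := lt_of_le_of_ne hle (fun hh => hδ (hh ▸ ha))
      exact absurd h (not_lt.2 (t.min'_le a (Finset.mem_filter.2 ⟨ha, hda⟩)))
  · refine ⟨δ + 1, by linarith, fun a ha => ?_⟩
    constructor
    · intro h; linarith
    · intro _
      by_contra hle
      push_neg at hle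
      have hda : δ < a := lt_of_le_of_ne hle (fun hh => hδ (hh ▸ ha))
      exact hne ⟨a, Finset.mem_filter.2 ⟨ha, hda⟩⟩



lemma aux_FL'_big (e : Fin 5 → E) (v : E) (hiv : ∀ i, ‖e i‖ < ‖v‖) {δ : ℝ} (hδ : ‖v‖ < δ) :
    AddSubgroup.closure {x : E | x ∈ AddSubgroup.closure (insert v (Set.range e)) ∧ ‖x‖ < δ}
      = AddSubgroup.closure (insert v (Set.range e)) := by
  apply le_antisymm
  · rw [AddSubgroup.closure_le]
    exact fun x hx => hx.1
  · rw [AddSubgroup.closure_le]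
    rintro y (rfl | ⟨i, rfl⟩)
    · exact AddSubgroup.subset_closure
        ⟨AddSubgroup.subset_closure (Set.mem_insert _ _), hδ⟩
    · exact AddSubgroup.subset_closure
        ⟨AddSubgroup.subset_closure (Set.mem_insert_of_mem _ (Set.mem_range_self i)),
          (hiv i).trans hδ⟩

lemma aux_FL'_small (e : Fin 5 → E) (v : E) (horth : ∀ i j : Fin 5, i ≠ j → ⟪e i, e j⟫ = 0)
    (hone : 1 ≤ ‖e 0‖) (hmono : StrictMono fun i : Fin 5 => ‖e i‖)
    (hv : v = (2 : ℝ)⁻¹ • ∑ i : Fin 5, e i) {δ : ℝ} (hδ : δ ≤ ‖v‖) :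
    AddSubgroup.closure {x : E | x ∈ AddSubgroup.closure (insert v (Set.range e)) ∧ ‖x‖ < δ}
      = AddSubgroup.closure (e '' {i | ‖e i‖ < δ}) := by
  apply le_antisymm
  · rw [AddSubgroup.closure_le]
    rintro x ⟨hx, hn⟩
    have hxL : x ∈ AddSubgroup.closure (Set.range e) := by
      by_contra hxL
      exact absurd hn (not_lt.2 (hδ.trans (aux_bound e horth hone hmono v hv hx hxL).1))
    exact aux_filL e horth hxL hn
  · apply AddSubgroup.closure_mono
    rintro y ⟨i, hi, rfl⟩
    exact ⟨AddSubgroup.subset_closure (Set.mem_insert_of_mem _ (Set.mem_range_self i)), hi⟩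

end AuxJump

/-- let `e₁, …, e₅` be pairwise orthogonal vectors in a real inner product
space with `1 ≤ ‖e₁‖ < ‖e₂‖ < ‖e₃‖ < ‖e₄‖ < ‖e₅‖ < √5/2`, let `L = ℤe₁ + ⋯ + ℤe₅` and
`m(l) = ‖l‖`.  Then `Jump(Fil_m^• L) = {‖e₁‖, …, ‖e₅‖}`.  Moreover, with
`v = (e₁ + ⋯ + e₅)/2` and `L' = L + ℤv`, every element of `L'` not in `L` has norm at least
`√5/2`, and `Jump(Fil_m^• L') = {‖e₁‖, …, ‖e₅‖, ‖v‖}`. -/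
theorem jumpSet_orthogonal_lattice {E : Type*} [NormedAddCommGroup E]
    [InnerProductSpace ℝ E] (e : Fin 5 → E)
    (horth : ∀ i j : Fin 5, i ≠ j → ⟪e i, e j⟫ = 0)
    (hone : 1 ≤ ‖e 0‖)
    (hmono : StrictMono fun i : Fin 5 => ‖e i‖)
    (hlt : ‖e 4‖ < Real.sqrt 5 / 2)
    (L : AddSubgroup E) (hL : L = AddSubgroup.closure (Set.range e))
    (v : E) (hv : v = (2 : ℝ)⁻¹ • ∑ i : Fin 5, e i)
    (L' : AddSubgroup E) (hL' : L' = AddSubgroup.closure (insert v (Set.range e))) :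
    AddJumpSet (fun x : L => ‖(x : E)‖) = Set.range (fun i : Fin 5 => ‖e i‖) ∧
    (∀ x : E, x ∈ L' → x ∉ L → Real.sqrt 5 / 2 ≤ ‖x‖) ∧
    AddJumpSet (fun x : L' => ‖(x : E)‖) =
      insert ‖v‖ (Set.range fun i : Fin 5 => ‖e i‖) := by
  subst hL hL'
  have hn1 : ∀ i : Fin 5, (1:ℝ) ≤ ‖e i‖ := fun i => hone.trans (hmono.monotone (Fin.zero_le i))
  have hpos : ∀ i : Fin 5, (0:ℝ) < ‖e i‖ := fun i => lt_of_lt_of_le one_pos (hn1 i)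
  have hn4 : ∀ i : Fin 5, ‖e i‖ ≤ ‖e 4‖ := fun i => hmono.monotone (by
    show i ≤ (4 : Fin 5)
    omega)
  have hvn : Real.sqrt 5 / 2 ≤ ‖v‖ := aux_vnorm e horth hone hmono v hv
  have hiv : ∀ i : Fin 5, ‖e i‖ < ‖v‖ := fun i => lt_of_le_of_lt (hn4 i) (hlt.trans_le hvn)
  have hvpos : (0:ℝ) < ‖v‖ := lt_of_le_of_lt (hpos 4).le (hiv 4)
  -- transfer for AddFil
  have tL : ∀ δ ε : ℝ, (AddFil (fun x : AddSubgroup.closure (Set.range e) => ‖(x : E)‖) δ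
      = AddFil (fun x : AddSubgroup.closure (Set.range e) => ‖(x : E)‖) ε) ↔
      (AddSubgroup.closure {x : E | x ∈ AddSubgroup.closure (Set.range e) ∧ ‖x‖ < δ}
      = AddSubgroup.closure {x : E | x ∈ AddSubgroup.closure (Set.range e) ∧ ‖x‖ < ε}) :=
    fun δ ε => aux_transfer _ δ ε
  have tL' : ∀ δ ε : ℝ, (AddFil (fun x : AddSubgroup.closure (insert v (Set.range e)) => ‖(x : E)‖) δ
      = AddFil (fun x : AddSubgroup.closure (insert v (Set.range e)) => ‖(x : E)‖) ε) ↔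
      (AddSubgroup.closure {x : E | x ∈ AddSubgroup.closure (insert v (Set.range e)) ∧ ‖x‖ < δ}
      = AddSubgroup.closure {x : E | x ∈ AddSubgroup.closure (insert v (Set.range e)) ∧ ‖x‖ < ε}) :=
    fun δ ε => aux_transfer _ δ ε
  refine ⟨?_, ?_, ?_⟩
  · -- part 1
    ext δ
    simp only [AddJumpSet, Set.mem_setOf_eq, Set.mem_range]
    constructor
    · rintro ⟨hδpos, hjump⟩
      by_contra hne
      push_neg at hne
      have hδnotin : δ ∉ Finset.image (fun i : Fin 5 => ‖e i‖) Finset.univ := by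
        simp only [Finset.mem_image, Finset.mem_univ, true_and, not_exists]
        exact hne
      obtain ⟨ε, hδε, hiff⟩ := exists_eps _ δ hδnotin
      refine hjump ε hδε ?_
      rw [tL]
      have hset : {i : Fin 5 | ‖e i‖ < δ} = {i : Fin 5 | ‖e i‖ < ε} :=
        Set.ext fun i => hiff _ (Finset.mem_image_of_mem _ (Finset.mem_univ i))
      rw [aux_FL e horth, aux_FL e horth, hset]
    · rintro ⟨j, rfl⟩
      refine ⟨hpos j, fun ε hε h => ?_⟩
      rw [tL] at h
      rw [aux_FL e horth, aux_FL e horth] at h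
      have hmem : e j ∈ AddSubgroup.closure (e '' {i : Fin 5 | ‖e i‖ < ε}) :=
        AddSubgroup.subset_closure (Set.mem_image_of_mem e hε)
      rw [← h] at hmem
      exact aux_sep e horth hone hmono (s := {i : Fin 5 | ‖e i‖ < ‖e j‖})
        (lt_irrefl ‖e j‖) hmem
  · -- part 2
    exact fun x hx hxL => (aux_bound e horth hone hmono v hv hx hxL).2
  · -- part 3
    ext δ
    simp only [AddJumpSet, Set.mem_setOf_eq, Set.mem_insert_iff, Set.mem_range]
    constructor
    · rintro ⟨hδpos, hjump⟩
      by_contra hne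
      push_neg at hne
      obtain ⟨hnev, hnee⟩ := hne
      have hδnotin : δ ∉ insert ‖v‖ (Finset.image (fun i : Fin 5 => ‖e i‖) Finset.univ) := by
        simp only [Finset.mem_insert, Finset.mem_image, Finset.mem_univ, true_and, not_or,
          not_exists]
        exact ⟨hnev, hnee⟩
      obtain ⟨ε, hδε, hiff⟩ := exists_eps _ δ hδnotin
      refine hjump ε hδε ?_
      rw [tL']
      have hviff : (‖v‖ < δ ↔ ‖v‖ < ε) := hiff _ (Finset.mem_insert_self _ _)
      have hset : {i : Fin 5 | ‖e i‖ < δ} = {i : Fin 5 | ‖e i‖ < ε} :=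
        Set.ext fun i => hiff _ (Finset.mem_insert_of_mem
          (Finset.mem_image_of_mem _ (Finset.mem_univ i)))
      rcases lt_or_ge ‖v‖ δ with hcase | hcase
      · rw [aux_FL'_big e v hiv hcase, aux_FL'_big e v hiv (hviff.1 hcase)]
      · have hcase' : ε ≤ ‖v‖ := not_lt.1 fun hh => absurd (hviff.2 hh) (not_lt.2 hcase)
        rw [aux_FL'_small e v horth hone hmono hv hcase,
          aux_FL'_small e v horth hone hmono hv hcase', hset]
    · rintro (rfl | ⟨j, rfl⟩)
      · refine ⟨hvpos, fun ε hε h => ?_⟩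
        rw [tL'] at h
        rw [aux_FL'_small e v horth hone hmono hv le_rfl, aux_FL'_big e v hiv hε] at h
        have hmem : v ∈ AddSubgroup.closure (insert v (Set.range e)) :=
          AddSubgroup.subset_closure (Set.mem_insert _ _)
        rw [← h] at hmem
        have : v ∈ AddSubgroup.closure (Set.range e) :=
          AddSubgroup.closure_mono (Set.image_subset_range e _) hmem
        exact aux_vnotL e horth hone v hv this
      · refine ⟨hpos j, fun ε hε h => ?_⟩
        rw [tL'] at h
        rw [aux_FL'_small e v horth hone hmono hv (hiv j).le] at h
        have hmem : e j ∈ AddSubgroup.closure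
            {x : E | x ∈ AddSubgroup.closure (insert v (Set.range e)) ∧ ‖x‖ < ε} :=
          AddSubgroup.subset_closure
            ⟨AddSubgroup.subset_closure (Set.mem_insert_of_mem _ (Set.mem_range_self j)), hε⟩
        rw [← h] at hmem
        exact aux_sep e horth hone hmono (s := {i : Fin 5 | ‖e i‖ < ‖e j‖})
          (lt_irrefl ‖e j‖) hmem
end

section
/- Let G be a finite group, let H and H' be subgroups of G, and let N be a normal subgroup of G contained in H ∩ H'. Then H and H' are Gassmann-Sunada equivalent in G if and only if H/N and H'/N are Gassmann-Sunada equivalent in G/N. -/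
section GassmannAux

open scoped Classical

variable {G : Type*} [Group G] [Finite G]

/-- The number of `x` conjugating `g` into `H`. -/
noncomputable def fcount (H : Subgroup G) (g : G) : ℕ :=
  Nat.card {x : G // x⁻¹ * g * x ∈ H}

lemma fcount_conj (H : Subgroup G) (g x : G) :
    fcount H (x⁻¹ * g * x) = fcount H g := by
  unfold fcount
  refine Nat.card_congr ((Equiv.mulLeft x).subtypeEquiv fun y => ?_)
  simp only [Equiv.coe_mulLeft]
  rw [show (x * y)⁻¹ * g * (x * y) = y⁻¹ * (x⁻¹ * g * x) * y by group]

lemma conjStable_mem {S : Set G} (hS : ConjStable S) {a : G} (x : G) (ha : a ∈ S) :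
    x⁻¹ * a * x ∈ S := by
  have := (Set.ext_iff.1 (hS x⁻¹) (x⁻¹ * a * x⁻¹⁻¹)).1 ⟨a, ha, rfl⟩
  simpa using this

/-- The double-counting set. -/
noncomputable def dset (H : Subgroup G) (S : Set G) : Type _ :=
  {p : G × G // p.2 ∈ S ∧ p.1⁻¹ * p.2 * p.1 ∈ H}

noncomputable instance (H : Subgroup G) (S : Set G) : Finite (dset H S) := by
  unfold dset; infer_instance

/-- Splitting the double-counting set as a sigma type. -/
noncomputable def dsetEquivSigma (H : Subgroup G) (S : Set G) :
    dset H S ≃ Σ s : S, {x : G // x⁻¹ * (s : G) * x ∈ H} where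
  toFun p := ⟨⟨p.1.2, p.2.1⟩, ⟨p.1.1, p.2.2⟩⟩
  invFun q := ⟨(q.2.1, q.1.1), ⟨q.1.2, q.2.2⟩⟩
  left_inv p := rfl
  right_inv q := rfl

/-- The other count of the double-counting set. -/
noncomputable def dsetEquivProd (H : Subgroup G) (S : Set G) (hS : ConjStable S) :
    dset H S ≃ G × ((H : Set G) ∩ S : Set G) where
  toFun p := ⟨p.1.1, ⟨p.1.1⁻¹ * p.1.2 * p.1.1, p.2.2, conjStable_mem hS _ p.2.1⟩⟩
  invFun q := ⟨(q.1, q.1 * q.2.1 * q.1⁻¹), by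
    have hmem := q.2.2
    refine ⟨?_, ?_⟩
    · have h0 := conjStable_mem hS q.1⁻¹ hmem.2
      simpa using h0
    · have h1 : q.1⁻¹ * (q.1 * (q.2 : G) * q.1⁻¹) * q.1 = (q.2 : G) := by group
      rw [h1]; exact hmem.1⟩
  left_inv p := by
    apply Subtype.ext
    apply Prod.ext
    · rfl
    · show p.1.1 * (p.1.1⁻¹ * p.1.2 * p.1.1) * p.1.1⁻¹ = p.1.2
      group
  right_inv q := by
    apply Prod.ext
    · rfl
    · apply Subtype.ext
      show q.1⁻¹ * (q.1 * (q.2 : G) * q.1⁻¹) * q.1 = (q.2 : G)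
      group

lemma card_dset_eq_sum (H : Subgroup G) (S : Set G) [Fintype S] :
    Nat.card (dset H S) = ∑ s : S, fcount H (s : G) := by
  letI : ∀ s : S, Fintype {x : G // x⁻¹ * (s : G) * x ∈ H} := fun s => Fintype.ofFinite _
  rw [Nat.card_congr (dsetEquivSigma H S), Nat.card_eq_fintype_card, Fintype.card_sigma]
  exact Finset.sum_congr rfl fun s _ => (Nat.card_eq_fintype_card).symm

lemma card_dset_eq_mul (H : Subgroup G) (S : Set G) (hS : ConjStable S) :
    Nat.card (dset H S) = Nat.card G * Set.ncard ((H : Set G) ∩ S) := by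
  rw [Nat.card_congr (dsetEquivProd H S hS), Nat.card_prod, Nat.card_coe_set_eq]

/-- The conjugacy class of `g` is conjugation-stable. -/
lemma conjStable_class (g : G) : ConjStable {y | ∃ x : G, x⁻¹ * g * x = y} := by
  intro z
  ext y
  constructor
  · rintro ⟨w, ⟨x, hx⟩, rfl⟩
    exact ⟨x * z⁻¹, by rw [← hx]; group⟩
  · rintro ⟨x, hx⟩
    exact ⟨z⁻¹ * y * z, ⟨x * z, by rw [← hx]; group⟩, by group⟩

lemma gassmann_iff_fcount (H H' : Subgroup G) :
    GassmannEquivalent H H' ↔ ∀ g : G, fcount H g = fcount H' g := by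
  constructor
  · intro hG g
    letI : Fintype ({y | ∃ x : G, x⁻¹ * g * x = y} : Set G) := Fintype.ofFinite _
    set C : Set G := {y | ∃ x : G, x⁻¹ * g * x = y} with hC
    have hCs : ConjStable C := conjStable_class g
    have hcount : Set.ncard ((H : Set G) ∩ C) = Set.ncard ((H' : Set G) ∩ C) := hG C hCs
    have h1 : Nat.card (dset H C) = Nat.card (dset H' C) := by
      rw [card_dset_eq_mul H C hCs, card_dset_eq_mul H' C hCs, hcount]
    rw [card_dset_eq_sum, card_dset_eq_sum] at h1
    have hconst : ∀ K : Subgroup G, ∀ s : C, fcount K (s : G) = fcount K g := by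
      rintro K ⟨s, x, hx⟩
      simp only [← hx]
      exact fcount_conj K g x
    rw [Finset.sum_congr rfl fun s _ => hconst H s,
      Finset.sum_congr rfl fun s _ => hconst H' s, Finset.sum_const, Finset.sum_const] at h1
    have hne : (Finset.univ : Finset C).card ≠ 0 := by
      rw [Finset.card_ne_zero, Finset.univ_nonempty_iff]
      exact ⟨⟨g, 1, by group⟩⟩
    exact Nat.eq_of_mul_eq_mul_left (Nat.pos_of_ne_zero hne) (by
      simpa [smul_eq_mul] using h1)
  · intro hf S hS
    letI : Fintype S := Fintype.ofFinite _
    have h1 : Nat.card (dset H S) = Nat.card (dset H' S) := by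
      rw [card_dset_eq_sum, card_dset_eq_sum]
      exact Finset.sum_congr rfl fun s _ => hf s
    rw [card_dset_eq_mul H S hS, card_dset_eq_mul H' S hS] at h1
    exact Nat.eq_of_mul_eq_mul_left Nat.card_pos h1

/-- Preimage of a property under the quotient map, as a product. -/
noncomputable def preimageEquiv (N : Subgroup G) [N.Normal] (P : G ⧸ N → Prop) :
    {x : G // P (QuotientGroup.mk x)} ≃ {y : G ⧸ N // P y} × N where
  toFun x := ⟨⟨QuotientGroup.mk x.1, x.2⟩,
    ⟨(QuotientGroup.mk x.1 : G ⧸ N).out⁻¹ * x.1, by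
      rw [← QuotientGroup.eq]
      exact (QuotientGroup.out_eq' _)⟩⟩
  invFun q := ⟨q.1.1.out * q.2.1, by
    have : QuotientGroup.mk (q.1.1.out * (q.2.1 : G)) = q.1.1 := by
      rw [QuotientGroup.mk_mul, (QuotientGroup.eq_one_iff _).2 q.2.2, mul_one,
        QuotientGroup.out_eq']
    rw [this]; exact q.1.2⟩
  left_inv x := by
    apply Subtype.ext
    show (QuotientGroup.mk x.1 : G ⧸ N).out * ((QuotientGroup.mk x.1 : G ⧸ N).out⁻¹ * x.1) = x.1
    group
  right_inv q := by
    have hmk : QuotientGroup.mk (q.1.1.out * (q.2.1 : G)) = q.1.1 := by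
      rw [QuotientGroup.mk_mul, (QuotientGroup.eq_one_iff _).2 q.2.2, mul_one,
        QuotientGroup.out_eq']
    apply Prod.ext
    · exact Subtype.ext hmk
    · apply Subtype.ext
      show (QuotientGroup.mk (q.1.1.out * (q.2.1 : G)) : G ⧸ N).out⁻¹ *
        (q.1.1.out * (q.2.1 : G)) = (q.2.1 : G)
      rw [hmk]
      group

end GassmannAux

/-- if `N` is a normal subgroup of a finite group `G` contained in `H ∩ H'`,
then `H` and `H'` are Gassmann-Sunada equivalent in `G` if and only if `H/N` and `H'/N` are
Gassmann-Sunada equivalent in `G/N`. -/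
theorem gassmannEquivalent_iff_quotient {G : Type*} [Group G] [Finite G]
    (H H' N : Subgroup G) [N.Normal] (hNH : N ≤ H) (hNH' : N ≤ H') :
    GassmannEquivalent H H' ↔
      GassmannEquivalent (H.map (QuotientGroup.mk' N)) (H'.map (QuotientGroup.mk' N)) := by
  have key : ∀ (K : Subgroup G), N ≤ K → ∀ g : G,
      fcount K g =
        Nat.card N * fcount (K.map (QuotientGroup.mk' N)) (QuotientGroup.mk g) := by
    intro K hK g
    have hcom : Subgroup.comap (QuotientGroup.mk' N) (K.map (QuotientGroup.mk' N)) = K := by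
      rw [Subgroup.comap_map_eq, QuotientGroup.ker_mk', sup_eq_left.mpr hK]
    have e1 : {x : G // x⁻¹ * g * x ∈ K} ≃
        {x : G // (QuotientGroup.mk x : G ⧸ N)⁻¹ * QuotientGroup.mk g * QuotientGroup.mk x ∈
          K.map (QuotientGroup.mk' N)} := by
      apply Equiv.subtypeEquivRight
      intro x
      have h2 : (QuotientGroup.mk x : G ⧸ N)⁻¹ * QuotientGroup.mk g * QuotientGroup.mk x =
          QuotientGroup.mk (x⁻¹ * g * x) := by
        simp
      rw [h2]
      conv_lhs => rw [← hcom]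
      rw [Subgroup.mem_comap]
      rfl
    have e2 := preimageEquiv N
      (fun y => y⁻¹ * QuotientGroup.mk g * y ∈ K.map (QuotientGroup.mk' N))
    unfold fcount
    rw [Nat.card_congr (e1.trans e2), Nat.card_prod, mul_comm]
  rw [gassmann_iff_fcount, gassmann_iff_fcount]
  constructor
  · intro h q
    obtain ⟨g, rfl⟩ := QuotientGroup.mk_surjective q
    have h1 := h g
    rw [key H hNH g, key H' hNH' g] at h1
    exact Nat.eq_of_mul_eq_mul_left Nat.card_pos h1
  · intro h g
    rw [key H hNH g, key H' hNH' g, h (QuotientGroup.mk g)]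
end

section
/- Let G be a finite group, let H and H' be subgroups of G, and let N be a normal subgroup of G contained in H ∩ H'. If H and H' are jump equivalent in G, then H/N and H'/N are jump equivalent in G/N. -/
/-- if `N` is a normal subgroup of a finite group `G` contained in `H ∩ H'` and
`H`, `H'` are jump equivalent in `G`, then `H/N` and `H'/N` are jump equivalent in `G/N`. -/
theorem jumpEquivalent_quotient_of_jumpEquivalent {G : Type*} [Group G] [Finite G]
    (H H' N : Subgroup G) [N.Normal] (hNH : N ≤ H) (hNH' : N ≤ H')
    (h : JumpEquivalent H H') :
    JumpEquivalent (H.map (QuotientGroup.mk' N)) (H'.map (QuotientGroup.mk' N)) := by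
  intro S T hS hT
  set π := QuotientGroup.mk' N with hπ
  -- membership version of conjugation stability
  have mem_of : ∀ (U : Set (G ⧸ N)), ConjStable U →
      ∀ (g x : G ⧸ N), x ∈ U → g * x * g⁻¹ ∈ U := by
    intro U hU g x hx
    rw [← hU g]
    exact ⟨x, hx, rfl⟩
  -- the pulled-back sets
  have stab : ∀ (U : Set (G ⧸ N)), ConjStable U →
      ConjStable (π ⁻¹' U ∪ (N : Set G)) := by
    intro U hU g
    apply Set.Subset.antisymm
    · rintro _ ⟨x, hx, rfl⟩
      rcases hx with hx | hx
      · left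
        show π (g * x * g⁻¹) ∈ U
        have : π (g * x * g⁻¹) = π g * π x * (π g)⁻¹ := by
          simp [mul_assoc]
        rw [this]
        exact mem_of U hU (π g) (π x) hx
      · exact Or.inr (Subgroup.Normal.conj_mem ‹N.Normal› x hx g)
    · intro x hx
      refine ⟨g⁻¹ * x * g, ?_, by group⟩
      rcases hx with hx | hx
      · left
        show π (g⁻¹ * x * g) ∈ U
        have : π (g⁻¹ * x * g) = (π g)⁻¹ * π x * ((π g)⁻¹)⁻¹ := by
          simp [mul_assoc]
        rw [this]
        exact mem_of U hU (π g)⁻¹ (π x) hx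
      · exact Or.inr (by simpa using Subgroup.Normal.conj_mem ‹N.Normal› x hx g⁻¹)
  -- key: closure in quotient is image of closure of pullback
  have key : ∀ (U : Set (G ⧸ N)) (K : Subgroup G), N ≤ K →
      Subgroup.closure ((K.map π : Set (G ⧸ N)) ∩ U) =
        (Subgroup.closure ((K : Set G) ∩ (π ⁻¹' U ∪ (N : Set G)))).map π := by
    intro U K hNK
    have himg : π '' ((K : Set G) ∩ (π ⁻¹' U ∪ (N : Set G))) =
        ((K.map π : Set (G ⧸ N)) ∩ U) ∪ {1} := by
      ext y
      constructor
      · rintro ⟨x, ⟨hxK, hx⟩, rfl⟩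
        rcases hx with hx | hx
        · exact Or.inl ⟨⟨x, hxK, rfl⟩, hx⟩
        · right
          simp only [Set.mem_singleton_iff, hπ, QuotientGroup.mk'_apply]
          exact (QuotientGroup.eq_one_iff x).2 hx
      · rintro (⟨⟨k, hk, rfl⟩, hy⟩ | hy)
        · exact ⟨k, ⟨hk, Or.inl hy⟩, rfl⟩
        · refine ⟨1, ⟨K.one_mem, Or.inr N.one_mem⟩, ?_⟩
          simp only [Set.mem_singleton_iff] at hy
          simp [hy]
    rw [MonoidHom.map_closure, himg, Subgroup.closure_union,
      Subgroup.closure_singleton_one, sup_bot_eq]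
  have hNle : ∀ (U : Set (G ⧸ N)) (K : Subgroup G), N ≤ K →
      N ≤ Subgroup.closure ((K : Set G) ∩ (π ⁻¹' U ∪ (N : Set G))) := by
    intro U K hNK n hn
    exact Subgroup.subset_closure ⟨hNK hn, Or.inr hn⟩
  have inj : ∀ A B : Subgroup G, N ≤ A → N ≤ B → A.map π = B.map π → A = B := by
    intro A B hA hB hAB
    have := congrArg (Subgroup.comap π) hAB
    rwa [Subgroup.comap_map_eq, Subgroup.comap_map_eq, hπ, QuotientGroup.ker_mk',
      sup_eq_left.2 hA, sup_eq_left.2 hB] at this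
  rw [key S H hNH, key T H hNH, key S H' hNH', key T H' hNH']
  constructor
  · intro hmap
    exact congrArg _ ((h _ _ (stab S hS) (stab T hT)).1
      (inj _ _ (hNle S H hNH) (hNle T H hNH) hmap))
  · intro hmap
    exact congrArg _ ((h _ _ (stab S hS) (stab T hT)).2
      (inj _ _ (hNle S H' hNH') (hNle T H' hNH') hmap))
end

section
/- In the alternating group A₄ on four letters, the unique subgroup V₄ of order 4 and any subgroup C₂ of order 2 are jump equivalent; in particular, (A₄, V₄, C₂) is a jump triple in which the two subgroups have different indices, so jump equivalent subgroups need not have equal index. -/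
namespace JumpAux

abbrev A4 := ↥(alternatingGroup (Fin 4))

lemma key_pow : ∀ x : A4, x ^ 4 = 1 → x ^ 2 = 1 := by decide

lemma key_mul : ∀ a b : A4, a ^ 2 = 1 → b ^ 2 = 1 → (a * b) ^ 2 = 1 := by decide

lemma key_inv : ∀ a : A4, a ^ 2 = 1 → a⁻¹ ^ 2 = 1 := by decide

lemma key_conj : ∀ a b : A4, a ≠ 1 → a ^ 2 = 1 → b ≠ 1 → b ^ 2 = 1 →
    ∃ g : A4, g * a * g⁻¹ = b := by decide

def Ksub : Subgroup A4 where
  carrier := {x | x ^ 2 = 1}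
  one_mem' := by show (1:A4) ^ 2 = 1; simp
  mul_mem' := fun {a b} ha hb => key_mul a b ha hb
  inv_mem' := fun {a} ha => key_inv a ha

instance : DecidablePred (· ∈ Ksub) := fun x => (inferInstance : Decidable (x ^ 2 = 1))

lemma card_Ksub : Nat.card Ksub = 4 := by
  rw [Nat.card_eq_fintype_card]
  decide

lemma card_A4 : Nat.card A4 = 12 := by
  rw [Nat.card_eq_fintype_card]; decide

/-- Any subgroup of order 4 is `Ksub`. -/
lemma eq_Ksub (V : Subgroup A4) (hV : Nat.card V = 4) : V = Ksub := by
  have hle : V ≤ Ksub := by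
    intro x hx
    have h4 : (⟨x, hx⟩ : V) ^ 4 = 1 := by
      have := pow_card_eq_one' (x := (⟨x, hx⟩ : V))
      rwa [hV] at this
    have : x ^ 4 = 1 := by
      have := congrArg (Subtype.val) h4
      simpa using this
    exact key_pow x this
  exact Subgroup.eq_of_le_of_card_ge hle (by rw [hV, card_Ksub])

def P (S : Set A4) : Prop := ∃ d ∈ S, d ≠ 1 ∧ d ^ 2 = 1

lemma D_subset {S : Set A4} (hS : ConjStable S) (h : P S) :
    ∀ d : A4, d ≠ 1 → d ^ 2 = 1 → d ∈ S := by
  obtain ⟨a, haS, ha1, ha2⟩ := h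
  intro d hd1 hd2
  obtain ⟨g, hg⟩ := key_conj a d ha1 ha2 hd1 hd2
  rw [← hg, ← hS g]
  exact Set.mem_image_of_mem _ haS

lemma closV_pos {S : Set A4} (hS : ConjStable S) (h : P S) :
    Subgroup.closure ((Ksub : Set A4) ∩ S) = Ksub := by
  apply le_antisymm
  · rw [Subgroup.closure_le]; exact Set.inter_subset_left
  · intro x hx
    rcases eq_or_ne x 1 with rfl | hx1
    · exact Subgroup.one_mem _
    · exact Subgroup.subset_closure ⟨hx, D_subset hS h x hx1 hx⟩

lemma closV_neg {S : Set A4} (h : ¬ P S) :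
    Subgroup.closure ((Ksub : Set A4) ∩ S) = ⊥ := by
  rw [eq_bot_iff, ← Subgroup.closure_singleton_one, Subgroup.closure_le]
  intro x ⟨hxK, hxS⟩
  rcases eq_or_ne x 1 with rfl | hx1
  · exact Subgroup.one_mem _
  · exact absurd ⟨x, hxS, hx1, hxK⟩ h

lemma closC_neg {C : Subgroup A4} (hC : Nat.card C = 2) {S : Set A4} (h : ¬ P S) :
    Subgroup.closure ((C : Set A4) ∩ S) = ⊥ := by
  rw [eq_bot_iff, ← Subgroup.closure_singleton_one, Subgroup.closure_le]
  intro x ⟨hxC, hxS⟩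
  have hx2 : x ^ 2 = 1 := by
    have h2 : (⟨x, hxC⟩ : C) ^ 2 = 1 := by
      have := pow_card_eq_one' (x := (⟨x, hxC⟩ : C))
      rwa [hC] at this
    have := congrArg (Subtype.val) h2
    simpa using this
  rcases eq_or_ne x 1 with rfl | hx1
  · exact Subgroup.one_mem _
  · exact absurd ⟨x, hxS, hx1, hx2⟩ h

lemma closC_pos {C : Subgroup A4} (hC : Nat.card C = 2) {S : Set A4}
    (hS : ConjStable S) (h : P S) :
    Subgroup.closure ((C : Set A4) ∩ S) = C := by
  -- find the nontrivial element of C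
  have hCbot : C ≠ ⊥ := by
    intro hb; rw [hb] at hC; simp at hC
  obtain ⟨⟨c, hcC⟩, hc1'⟩ := (Subgroup.ne_bot_iff_exists_ne_one).mp hCbot
  have hc1 : c ≠ 1 := fun h => hc1' (Subtype.ext h)
  have hc2 : c ^ 2 = 1 := by
    have h2 : (⟨c, hcC⟩ : C) ^ 2 = 1 := by
      have := pow_card_eq_one' (x := (⟨c, hcC⟩ : C))
      rwa [hC] at this
    have := congrArg (Subtype.val) h2
    simpa using this
  have hcS : c ∈ S := D_subset hS h c hc1 hc2
  have hle : Subgroup.closure ((C : Set A4) ∩ S) ≤ C := by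
    rw [Subgroup.closure_le]; exact Set.inter_subset_left
  apply Subgroup.eq_of_le_of_card_ge hle
  rw [hC]
  have hmem : c ∈ Subgroup.closure ((C : Set A4) ∩ S) :=
    Subgroup.subset_closure ⟨hcC, hcS⟩
  have hdvd : Nat.card (Subgroup.closure ((C : Set A4) ∩ S)) ∣ 2 := by
    rw [← hC]; exact Subgroup.card_dvd_of_le hle
  have hne1 : Nat.card (Subgroup.closure ((C : Set A4) ∩ S)) ≠ 1 := by
    intro h1
    have hb := Subgroup.card_eq_one.mp h1
    rw [hb] at hmem
    exact hc1 (by simpa using hmem)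
  rcases (Nat.dvd_prime Nat.prime_two).mp hdvd with h | h <;> omega
end JumpAux

/-- in the alternating group `A₄` on four letters there is a unique subgroup
`V₄` of order 4; `V₄` and any subgroup `C₂` of order 2 are jump equivalent, and they have
different indices (so jump equivalent subgroups need not have equal index). -/
theorem alternatingGroup_V4_C2_jumpEquivalent :
    (∃! V : Subgroup ↥(alternatingGroup (Fin 4)), Nat.card V = 4) ∧
    ∀ V C : Subgroup ↥(alternatingGroup (Fin 4)),
      Nat.card V = 4 → Nat.card C = 2 →
        JumpEquivalent V C ∧ V.index ≠ C.index := by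
  constructor
  · exact ⟨JumpAux.Ksub, JumpAux.card_Ksub, fun V hV => JumpAux.eq_Ksub V hV⟩
  · intro V C hV hC
    have hVne : V ≠ ⊥ := by
      intro h; rw [h] at hV; simp at hV
    have hCne : C ≠ ⊥ := by
      intro h; rw [h] at hC; simp at hC
    have hVK := JumpAux.eq_Ksub V hV
    constructor
    · intro S T hS hT
      rw [hVK]
      by_cases pS : JumpAux.P S <;> by_cases pT : JumpAux.P T
      · rw [JumpAux.closV_pos hS pS, JumpAux.closV_pos hT pT,
            JumpAux.closC_pos hC hS pS, JumpAux.closC_pos hC hT pT]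
        simp
      · rw [JumpAux.closV_pos hS pS, JumpAux.closV_neg pT,
            JumpAux.closC_pos hC hS pS, JumpAux.closC_neg hC pT]
        rw [← hVK]
        simp [hVne, hCne]
      · rw [JumpAux.closV_neg pS, JumpAux.closV_pos hT pT,
            JumpAux.closC_neg hC pS, JumpAux.closC_pos hC hT pT]
        rw [← hVK]
        simp [eq_comm, hVne, hCne]
      · rw [JumpAux.closV_neg pS, JumpAux.closV_neg pT,
            JumpAux.closC_neg hC pS, JumpAux.closC_neg hC pT]
    · have h1 := Subgroup.card_mul_index (H := V)
      have h2 := Subgroup.card_mul_index (H := C)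
      rw [JumpAux.card_A4, hV] at h1
      rw [JumpAux.card_A4, hC] at h2
      omega
end

section
/- Let H and H' be finite groups of the same order n such that for every divisor d of n the number of elements of order d in H equals the number of elements of order d in H'. Then the images of H and H' under regular embeddings into the symmetric group Perm(Fin n) are Gassmann-Sunada equivalent subgroups of Perm(Fin n). -/
/-- The regular embedding of a group `K` with a bijection `e : K ≃ Fin n` into the symmetric
group `Perm (Fin n)`: the action of `K` on itself by left multiplication, transported along
`e`. -/
def regularEmbedding {K : Type*} [Group K] {n : ℕ} (e : K ≃ Fin n) :
    K →* Equiv.Perm (Fin n) where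
  toFun k := (e.symm.trans (Equiv.mulLeft k)).trans e
  map_one' := by
    ext x
    simp
  map_mul' k k' := by
    ext x
    simp [mul_assoc]

section Aux

variable {K : Type*} [Group K] {n : ℕ}

lemma regularEmbedding_apply (e : K ≃ Fin n) (k : K) (x : Fin n) :
    regularEmbedding e k x = e (k * e.symm x) := rfl

lemma regularEmbedding_injective (e : K ≃ Fin n) :
    Function.Injective (regularEmbedding e) := by
  intro a b h
  have := congrArg (fun σ : Equiv.Perm (Fin n) => e.symm (σ (e 1))) h
  simpa [regularEmbedding_apply] using this

lemma pow_regularEmbedding_apply (e : K ≃ Fin n) (k : K) (m : ℕ) (x : Fin n) :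
    ((regularEmbedding e k) ^ m) x = e (k ^ m * e.symm x) := by
  rw [← map_pow]; rfl

lemma orderOf_cycleOf_regularEmbedding (e : K ≃ Fin n) (k : K) (x : Fin n) :
    orderOf ((regularEmbedding e k).cycleOf x) = orderOf k := by
  rw [orderOf_eq_orderOf_iff]
  intro m
  constructor
  · intro h
    have h1 : (((regularEmbedding e k).cycleOf x) ^ m) x = x := by rw [h]; rfl
    rw [Equiv.Perm.cycleOf_pow_apply_self, pow_regularEmbedding_apply] at h1
    have h2 : k ^ m * e.symm x = e.symm x := by
      have := congrArg e.symm h1; simpa using this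
    exact mul_eq_right.mp h2
  · intro h
    have hσ : (regularEmbedding e k) ^ m = 1 := by
      rw [← map_pow, h, map_one]
    ext z
    by_cases hz : (regularEmbedding e k).SameCycle x z
    · rw [hz.cycleOf_eq, Equiv.Perm.cycleOf_pow_apply_self, hσ]
    · simp [Equiv.Perm.pow_apply_eq_self_of_apply_eq_self
        (Equiv.Perm.cycleOf_apply_of_not_sameCycle hz)]

lemma cycleType_regularEmbedding (e : K ≃ Fin n) {k : K} (hk : k ≠ 1) :
    (regularEmbedding e k).cycleType =
      Multiset.replicate (n / orderOf k) (orderOf k) := by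
  have : Finite K := Finite.of_equiv (Fin n) e.symm
  set σ := regularEmbedding e k with hσdef
  have hfix : ∀ x, σ x ≠ x := by
    intro x hx
    apply hk
    rw [regularEmbedding_apply] at hx
    have h2 : k * e.symm x = e.symm x := by
      have := congrArg e.symm hx; simpa using this
    exact mul_eq_right.mp h2
  have hmem : ∀ r ∈ σ.cycleType, r = orderOf k := by
    intro r hr
    rw [Equiv.Perm.cycleType_def, Multiset.mem_map] at hr
    obtain ⟨c, hc, rfl⟩ := hr
    rw [Finset.mem_val] at hc
    obtain ⟨x, hx, -⟩ := (Equiv.Perm.mem_cycleFactorsFinset_iff.mp hc).1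
    have hxs : x ∈ c.support := by simp [Equiv.Perm.mem_support, hx]
    have hcx : c = σ.cycleOf x := Equiv.Perm.cycle_is_cycleOf hxs hc
    have hcyc2 : (σ.cycleOf x).IsCycle := Equiv.Perm.isCycle_cycleOf σ (hfix x)
    show c.support.card = orderOf k
    rw [hcx, ← hcyc2.orderOf, orderOf_cycleOf_regularEmbedding]
  have hrep : σ.cycleType = Multiset.replicate (Multiset.card σ.cycleType) (orderOf k) :=
    Multiset.eq_replicate_card.mpr hmem
  have hsupp : σ.support = Finset.univ := by
    ext x; simp [Equiv.Perm.mem_support, hfix x]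
  have hsum : σ.cycleType.sum = n := by
    rw [Equiv.Perm.sum_cycleType, hsupp]; simp
  have hn : Multiset.card σ.cycleType * orderOf k = n := by
    conv_rhs => rw [← hsum]
    rw [hrep]
    simp [Multiset.sum_replicate, mul_comm]
  have hdpos : 0 < orderOf k := orderOf_pos k
  have hcard : Multiset.card σ.cycleType = n / orderOf k :=
    (Nat.div_eq_of_eq_mul_left hdpos hn.symm).symm
  rw [hrep, hcard]

lemma isConj_regularEmbedding {H H' : Type*} [Group H] [Group H']
    (e : H ≃ Fin n) (e' : H' ≃ Fin n) {k : H} {k' : H'}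
    (h : orderOf k = orderOf k') :
    IsConj (regularEmbedding e k) (regularEmbedding e' k') := by
  by_cases hk : k = 1
  · have hk' : k' = 1 := by
      rw [hk, orderOf_one] at h
      exact orderOf_eq_one_iff.mp h.symm
    rw [hk, hk', map_one, map_one]
  · have hk' : k' ≠ 1 := by
      intro h1
      rw [h1, orderOf_one] at h
      exact hk (orderOf_eq_one_iff.mp h)
    rw [Equiv.Perm.isConj_iff_cycleType_eq, cycleType_regularEmbedding e hk,
      cycleType_regularEmbedding e' hk', h]

lemma mem_iff_of_conjStable {G : Type*} [Group G] {S : Set G} (hS : ConjStable S)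
    {a b : G} (hab : IsConj a b) : a ∈ S ↔ b ∈ S := by
  obtain ⟨c, hc⟩ := hab
  have hb : b = (c : G) * a * (c : G)⁻¹ := by
    rw [eq_mul_inv_iff_mul_eq]; exact hc.eq.symm
  constructor
  · intro ha
    rw [← hS (c : G)]
    exact ⟨a, ha, hb.symm⟩
  · intro hbS
    rw [← hS ((c : G)⁻¹)]
    refine ⟨b, hbS, ?_⟩
    rw [hb]; group

end Aux

/-- if `H` and `H'` are finite groups of the same order `n` with the same number
of elements of order `d` for every divisor `d` of `n`, then their images under regular
embeddings into `Perm (Fin n)` are Gassmann-Sunada equivalent. -/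
theorem gassmannEquivalent_range_regularEmbedding {n : ℕ}
    {H H' : Type*} [Group H] [Group H'] (e : H ≃ Fin n) (e' : H' ≃ Fin n)
    (hcount : ∀ d : ℕ, d ∣ n →
      Nat.card {x : H // orderOf x = d} = Nat.card {x : H' // orderOf x = d}) :
    GassmannEquivalent (regularEmbedding e).range (regularEmbedding e').range := by
  have hH : Finite H := Finite.of_equiv (Fin n) e.symm
  have hH' : Finite H' := Finite.of_equiv (Fin n) e'.symm
  have hcardH : Nat.card H = n := by rw [Nat.card_congr e, Nat.card_eq_fintype_card]; simp
  have hcardH' : Nat.card H' = n := by rw [Nat.card_congr e', Nat.card_eq_fintype_card]; simp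
  have hcount' : ∀ d : ℕ,
      Nonempty ({x : H // orderOf x = d} ≃ {x : H' // orderOf x = d}) := by
    intro d
    rw [← Finite.card_eq]
    by_cases hd : d ∣ n
    · exact hcount d hd
    · have h1 : IsEmpty {x : H // orderOf x = d} :=
        ⟨fun ⟨x, hx⟩ => hd (hx ▸ (hcardH ▸ orderOf_dvd_natCard x))⟩
      have h2 : IsEmpty {x : H' // orderOf x = d} :=
        ⟨fun ⟨x, hx⟩ => hd (hx ▸ (hcardH' ▸ orderOf_dvd_natCard x))⟩
      simp [Nat.card_of_isEmpty]
  let g : ∀ d : ℕ, {x : H // orderOf x = d} ≃ {x : H' // orderOf x = d} :=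
    fun d => (hcount' d).some
  let ψ : H ≃ H' :=
    (Equiv.sigmaFiberEquiv (orderOf : H → ℕ)).symm.trans
      ((Equiv.sigmaCongrRight g).trans (Equiv.sigmaFiberEquiv (orderOf : H' → ℕ)))
  have hψ : ∀ x : H, orderOf (ψ x) = orderOf x := by
    intro x
    exact (g (orderOf x) ⟨x, rfl⟩).2
  intro S hS
  have key : ∀ x : H, (regularEmbedding e x ∈ S ↔ regularEmbedding e' (ψ x) ∈ S) :=
    fun x => mem_iff_of_conjStable hS (isConj_regularEmbedding e e' (hψ x).symm)
  have h1 : ((regularEmbedding e).range : Set (Equiv.Perm (Fin n))) ∩ S =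
      (regularEmbedding e) '' {x : H | regularEmbedding e x ∈ S} := by
    ext σ
    constructor
    · rintro ⟨hσr, hσ⟩
      obtain ⟨x, rfl⟩ := MonoidHom.mem_range.mp hσr
      exact ⟨x, hσ, rfl⟩
    · rintro ⟨x, hx, rfl⟩
      exact ⟨MonoidHom.mem_range.mpr ⟨x, rfl⟩, hx⟩
  have h2 : ((regularEmbedding e').range : Set (Equiv.Perm (Fin n))) ∩ S =
      (regularEmbedding e') '' {y : H' | regularEmbedding e' y ∈ S} := by
    ext σ
    constructor
    · rintro ⟨hσr, hσ⟩
      obtain ⟨x, rfl⟩ := MonoidHom.mem_range.mp hσr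
      exact ⟨x, hσ, rfl⟩
    · rintro ⟨x, hx, rfl⟩
      exact ⟨MonoidHom.mem_range.mpr ⟨x, rfl⟩, hx⟩
  have h3 : {x : H | regularEmbedding e x ∈ S} =
      ψ.symm '' {y : H' | regularEmbedding e' y ∈ S} := by
    rw [Equiv.image_eq_preimage_symm, Equiv.symm_symm]
    exact Set.ext key
  rw [h1, h2, Set.ncard_image_of_injective _ (regularEmbedding_injective e),
    Set.ncard_image_of_injective _ (regularEmbedding_injective e'), h3,
    Set.ncard_image_of_injective _ ψ.symm.injective]
end

section
/- Let k be a finite field with q elements and let V be a k-vector space of finite dimension d ≥ 1. Let v₀ ∈ V be a nonzero vector and let φ : V → k be a nonzero linear functional. Let H = {g ∈ GL(V) : g v₀ = v₀} and H' = {g ∈ GL(V) : φ ∘ g = φ}. Then H and H' are Gassmann-Sunada equivalent subgroups of GL(V), and if d ≥ 2 and (q,d) ≠ (2,2) then H and H' are not conjugate in GL(V). -/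
open Module

/-! Auxiliary material. -/

private lemma exists_linEquiv_map_eq {k W : Type*} [Field k] [AddCommGroup W] [Module k W]
    [FiniteDimensional k W] {a b : W} (ha : a ≠ 0) (hb : b ≠ 0) :
    ∃ e : W ≃ₗ[k] W, e a = b := by
  classical
  have lia : LinearIndepOn k id {a} := LinearIndepOn.singleton ha
  have lib : LinearIndepOn k id {b} := LinearIndepOn.singleton hb
  let Ba := Basis.extend lia
  let Bb := Basis.extend lib
  have ca := Module.finrank_eq_card_basis Ba
  have cb := Module.finrank_eq_card_basis Bb
  let e0 := Fintype.equivOfCardEq (ca ▸ cb ▸ rfl :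
    Fintype.card (lia.extend (Set.subset_univ _)) = Fintype.card (lib.extend (Set.subset_univ _)))
  let ia : (lia.extend (Set.subset_univ _) : Set W) := ⟨a, lia.subset_extend _ rfl⟩
  let ib : (lib.extend (Set.subset_univ _) : Set W) := ⟨b, lib.subset_extend _ rfl⟩
  let e1 := e0.trans (Equiv.swap (e0 ia) ib)
  refine ⟨Ba.equiv Bb e1, ?_⟩
  have h1 : Ba ia = a := Basis.extend_apply_self lia ia
  have h2 : Bb ib = b := Basis.extend_apply_self lib ib
  have h3 := Ba.equiv_apply ia Bb e1
  rw [h1] at h3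
  rw [h3]
  have h4 : e1 ia = ib := by simp [e1, Equiv.swap_apply_left]
  rw [h4, h2]

private def subNeZeroEquiv {k V : Type*} [Field k] [AddCommGroup V] [Module k V]
    (p : Submodule k V) (P : V → Prop) (h : ∀ v, P v ↔ v ∈ p) :
    {v : V // v ≠ 0 ∧ P v} ≃ {x : p // x ≠ 0} where
  toFun v := ⟨⟨v.1, (h v.1).1 v.2.2⟩, fun hx => v.2.1 (congrArg Subtype.val hx)⟩
  invFun x := ⟨x.1.1, ⟨fun h0 => x.2 (Subtype.ext h0), (h _).2 x.1.2⟩⟩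
  left_inv _ := rfl
  right_inv _ := rfl

private lemma fixcount {k V : Type*} [Field k] [AddCommGroup V] [Module k V]
    [FiniteDimensional k V] (g : V →ₗ[k] V) :
    Nat.card {v : V // v ≠ 0 ∧ g v = v} =
      Nat.card {ψ : Module.Dual k V // ψ ≠ 0 ∧ ψ.comp g = ψ} := by
  classical
  set f := g - LinearMap.id with hf
  have hker : ∀ v : V, (g v = v) ↔ v ∈ LinearMap.ker f := by
    intro v; simp [hf, sub_eq_zero]
  have hker' : ∀ ψ : Module.Dual k V, (ψ.comp g = ψ) ↔ ψ ∈ LinearMap.ker f.dualMap := by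
    intro ψ
    rw [LinearMap.mem_ker, LinearMap.dualMap_apply']
    constructor
    · intro h; ext v; simp [hf, LinearMap.comp_apply, map_sub]
      rw [← LinearMap.comp_apply ψ g, h]; simp
    · intro h
      ext v
      have := congrFun (congrArg (fun (a : V →ₗ[k] k) => (a : V → k)) h) v
      simp [hf, LinearMap.comp_apply, map_sub] at this
      simp [LinearMap.comp_apply, sub_eq_zero] at this ⊢
      exact this
  have hfr : finrank k (LinearMap.ker f) = finrank k (LinearMap.ker f.dualMap) := by
    have h1 := LinearMap.finrank_range_add_finrank_ker f
    have h2 := LinearMap.finrank_range_add_finrank_ker f.dualMap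
    rw [LinearMap.finrank_range_dualMap_eq_finrank_range, Subspace.dual_finrank_eq] at h2
    omega
  haveI : FiniteDimensional k (Module.Dual k V) := inferInstance
  haveI := Module.Free.of_divisionRing k (LinearMap.ker f.dualMap)
  haveI := Module.Free.of_divisionRing k (LinearMap.ker f)
  have e : (LinearMap.ker f : Submodule k V) ≃ₗ[k]
      (LinearMap.ker f.dualMap : Submodule k (Module.Dual k V)) :=
    LinearEquiv.ofFinrankEq _ _ hfr
  refine Nat.card_congr (((subNeZeroEquiv _ _ hker).trans
    (e.toEquiv.subtypeEquiv fun x => not_congr ?_)).trans (subNeZeroEquiv _ _ hker').symm)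
  exact (LinearEquiv.map_eq_zero_iff e).symm

private def conjFiberEquiv {G : Type*} [Group G] {S : Set G} (hS : ConjStable S) (c : G)
    (P Q : G → Prop) (hPQ : ∀ x, P x ↔ Q (c * x * c⁻¹)) :
    {x : G // P x ∧ x ∈ S} ≃ {y : G // Q y ∧ y ∈ S} where
  toFun x := ⟨c * x.1 * c⁻¹, (hPQ x.1).1 x.2.1, by
    have : c * x.1 * c⁻¹ ∈ (fun z => c * z * c⁻¹) '' S := ⟨x.1, x.2.2, rfl⟩
    rwa [hS c] at this⟩
  invFun y := ⟨c⁻¹ * y.1 * c, by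
    have hy : Q (c * (c⁻¹ * y.1 * c) * c⁻¹) := by
      have : c * (c⁻¹ * y.1 * c) * c⁻¹ = y.1 := by group
      rw [this]; exact y.2.1
    refine ⟨(hPQ _).2 hy, ?_⟩
    have : c⁻¹ * y.1 * c ∈ (fun z => c⁻¹ * z * c⁻¹⁻¹) '' S := ⟨y.1, y.2.2, by group⟩
    rwa [hS c⁻¹] at this⟩
  left_inv x := by ext; simp only; group
  right_inv y := by ext; simp only; group

section Main

variable {k : Type*} [Field k] [Fintype k] {V : Type*} [AddCommGroup V] [Module k V]
  [FiniteDimensional k V]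

local notation "G" => LinearMap.GeneralLinearGroup k V

private def toGL (e : V ≃ₗ[k] V) : LinearMap.GeneralLinearGroup k V :=
  ⟨e.toLinearMap, e.symm.toLinearMap,
    by ext x; simp [Module.End.mul_apply], by ext x; simp [Module.End.mul_apply]⟩

private lemma toGL_coe (e : V ≃ₗ[k] V) : ((toGL e : G) : V →ₗ[k] V) = e.toLinearMap := rfl

private lemma toGL_inv_coe (e : V ≃ₗ[k] V) :
    (((toGL e)⁻¹ : G) : V →ₗ[k] V) = e.symm.toLinearMap := rfl

private lemma inv_apply_of_apply {c : G} {a b : V} (hc : (c : V →ₗ[k] V) a = b) :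
    ((c⁻¹ : G) : V →ₗ[k] V) b = a := by
  rw [← hc, ← Module.End.mul_apply, ← Units.val_mul, inv_mul_cancel]
  simp

private lemma conj_fix (c x : G) {a b : V} (hc : (c : V →ₗ[k] V) a = b)
    (hx : (x : V →ₗ[k] V) a = a) : ((c * x * c⁻¹ : G) : V →ₗ[k] V) b = b := by
  have hi := inv_apply_of_apply hc
  simp only [Units.val_mul, Module.End.mul_apply, hi, hx, hc]

private lemma conj_fix_iff (c x : G) {a b : V} (hc : (c : V →ₗ[k] V) a = b) :
    (x : V →ₗ[k] V) a = a ↔ ((c * x * c⁻¹ : G) : V →ₗ[k] V) b = b := by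
  constructor
  · exact conj_fix c x hc
  · intro h
    have := conj_fix c⁻¹ (c * x * c⁻¹) (inv_apply_of_apply hc) h
    rwa [show c⁻¹ * (c * x * c⁻¹) * c⁻¹⁻¹ = x by group] at this

private lemma conj_fix_dual (c x : G) {α β : Module.Dual k V}
    (hc : α.comp ((c⁻¹ : G) : V →ₗ[k] V) = β) (hx : α.comp (x : V →ₗ[k] V) = α) :
    β.comp ((c * x * c⁻¹ : G) : V →ₗ[k] V) = β := by
  ext v
  have hcc : ∀ w : V, ((c⁻¹ : G) : V →ₗ[k] V) ((c : V →ₗ[k] V) w) = w := by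
    intro w
    rw [← Module.End.mul_apply, ← Units.val_mul, inv_mul_cancel]; simp
  have hα : ∀ w : V, α ((x : V →ₗ[k] V) w) = α w := fun w => by
    have := LinearMap.congr_fun hx w; simpa using this
  rw [← hc]
  simp only [LinearMap.comp_apply, Units.val_mul, Module.End.mul_apply, hcc, hα]

private lemma conj_fix_dual_iff (c x : G) {α β : Module.Dual k V}
    (hc : α.comp ((c⁻¹ : G) : V →ₗ[k] V) = β) :
    α.comp (x : V →ₗ[k] V) = α ↔ β.comp ((c * x * c⁻¹ : G) : V →ₗ[k] V) = β := by
  constructor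
  · exact conj_fix_dual c x hc
  · intro h
    have hc2 : β.comp (((c⁻¹)⁻¹ : G) : V →ₗ[k] V) = α := by
      rw [inv_inv, ← hc, LinearMap.comp_assoc]
      have h1 : ((c⁻¹ : G) : V →ₗ[k] V) ∘ₗ ((c : G) : V →ₗ[k] V) = LinearMap.id := by
        rw [← Module.End.mul_eq_comp, ← Units.val_mul, inv_mul_cancel, Units.val_one,
          Module.End.one_eq_id]
      rw [h1, LinearMap.comp_id]
    have := conj_fix_dual c⁻¹ (c * x * c⁻¹) hc2 h
    rwa [show c⁻¹ * (c * x * c⁻¹) * c⁻¹⁻¹ = x by group] at this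

end Main

section Main2

variable {k : Type*} [Field k] [Fintype k] {V : Type*} [AddCommGroup V] [Module k V]
  [FiniteDimensional k V]

local notation "G" => LinearMap.GeneralLinearGroup k V

private lemma gassmann_main {v₀ : V} (hv₀ : v₀ ≠ 0) {φ : V →ₗ[k] k} (hφ : φ ≠ 0)
    (H H' : Subgroup (LinearMap.GeneralLinearGroup k V))
    (hH : ∀ g : G, g ∈ H ↔ (g : V →ₗ[k] V) v₀ = v₀)
    (hH' : ∀ g : G, g ∈ H' ↔ φ.comp (g : V →ₗ[k] V) = φ) :
    GassmannEquivalent H H' := by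
  classical
  intro S hS
  haveI : Finite V := Finite.of_equiv _ (Module.finBasis k V).equivFun.toEquiv.symm
  haveI : FiniteDimensional k (Module.Dual k V) := inferInstance
  haveI : Finite (Module.Dual k V) :=
    Finite.of_equiv _ (Module.finBasis k (Module.Dual k V)).equivFun.toEquiv.symm
  haveI : Finite (V →ₗ[k] V) :=
    Finite.of_injective (fun f : V →ₗ[k] V => (f : V → V)) DFunLike.coe_injective
  haveI : Finite (LinearMap.GeneralLinearGroup k V) := inferInstance
  have trans1 : ∀ v : {v : V // v ≠ 0}, ∃ c : G, (c : V →ₗ[k] V) v₀ = v.1 := fun v => by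
    obtain ⟨e, he⟩ := exists_linEquiv_map_eq (k := k) hv₀ v.2
    exact ⟨toGL e, he⟩
  have trans2 : ∀ ψ : {ψ : Module.Dual k V // ψ ≠ 0},
      ∃ c : G, φ.comp ((c⁻¹ : G) : V →ₗ[k] V) = ψ.1 := fun ψ => by
    obtain ⟨u, hu⟩ := exists_linEquiv_map_eq (k := k) (W := Module.Dual k V) hφ ψ.2
    refine ⟨toGL (((Module.evalEquiv k V).trans u.dualMap).trans
      (Module.evalEquiv k V).symm).symm, ?_⟩
    rw [toGL_inv_coe, LinearEquiv.symm_symm]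
    ext x
    simp [Module.apply_evalEquiv_symm_apply, LinearEquiv.dualMap_apply, hu]
  choose cv hcv using trans1
  choose cψ hcψ using trans2
  let Fv := {v : V // v ≠ 0}
  let Fψ := {ψ : Module.Dual k V // ψ ≠ 0}
  let A := {x : G // x ∈ (H : Set G) ∧ x ∈ S}
  let A' := {x : G // x ∈ (H' : Set G) ∧ x ∈ S}
  let I1 := {p : (LinearMap.GeneralLinearGroup k V) × V //
    p.1 ∈ S ∧ (p.2 ≠ 0 ∧ (p.1 : V →ₗ[k] V) p.2 = p.2)}
  let I2 := {p : (LinearMap.GeneralLinearGroup k V) × (Module.Dual k V) //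
    p.1 ∈ S ∧ (p.2 ≠ 0 ∧ p.2.comp (p.1 : V →ₗ[k] V) = p.2)}
  let E1 : I1 ≃ Σ v : Fv, {x : G // ((x : V →ₗ[k] V) v.1 = v.1) ∧ x ∈ S} :=
    ⟨fun p => ⟨⟨p.1.2, p.2.2.1⟩, ⟨p.1.1, p.2.2.2, p.2.1⟩⟩,
     fun t => ⟨(t.2.1, t.1.1), t.2.2.2, t.1.2, t.2.2.1⟩,
     fun p => rfl, fun t => rfl⟩
  let E2 : I1 ≃ Σ x : {x : G // x ∈ S}, {v : V // v ≠ 0 ∧ (x.1 : V →ₗ[k] V) v = v} :=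
    ⟨fun p => ⟨⟨p.1.1, p.2.1⟩, ⟨p.1.2, p.2.2⟩⟩,
     fun t => ⟨(t.1.1, t.2.1), t.1.2, t.2.2⟩, fun p => rfl, fun t => rfl⟩
  let E1' : I2 ≃ Σ ψ : Fψ, {x : G // (ψ.1.comp (x : V →ₗ[k] V) = ψ.1) ∧ x ∈ S} :=
    ⟨fun p => ⟨⟨p.1.2, p.2.2.1⟩, ⟨p.1.1, p.2.2.2, p.2.1⟩⟩,
     fun t => ⟨(t.2.1, t.1.1), t.2.2.2, t.1.2, t.2.2.1⟩,
     fun p => rfl, fun t => rfl⟩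
  let E2' : I2 ≃ Σ x : {x : G // x ∈ S},
      {ψ : Module.Dual k V // ψ ≠ 0 ∧ ψ.comp (x.1 : V →ₗ[k] V) = ψ} :=
    ⟨fun p => ⟨⟨p.1.1, p.2.1⟩, ⟨p.1.2, p.2.2⟩⟩,
     fun t => ⟨(t.1.1, t.2.1), t.1.2, t.2.2⟩, fun p => rfl, fun t => rfl⟩
  let EA : ∀ v : Fv, A ≃ {y : G // ((y : V →ₗ[k] V) v.1 = v.1) ∧ y ∈ S} :=
    fun v => conjFiberEquiv hS (cv v) _ _ (fun x => by
      rw [SetLike.mem_coe, hH]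
      exact conj_fix_iff (cv v) x (hcv v))
  let EB : ∀ ψ : Fψ, A' ≃ {y : G // (ψ.1.comp (y : V →ₗ[k] V) = ψ.1) ∧ y ∈ S} :=
    fun ψ => conjFiberEquiv hS (cψ ψ) _ _ (fun x => by
      rw [SetLike.mem_coe, hH']
      exact conj_fix_dual_iff (cψ ψ) x (hcψ ψ))
  let EC : ∀ x : {x : G // x ∈ S},
      {v : V // v ≠ 0 ∧ (x.1 : V →ₗ[k] V) v = v} ≃
      {ψ : Module.Dual k V // ψ ≠ 0 ∧ ψ.comp (x.1 : V →ₗ[k] V) = ψ} :=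
    fun x => (Finite.card_eq.mp (fixcount ((x.1 : G) : V →ₗ[k] V))).some
  have chain : Fv × A ≃ Fψ × A' :=
    ((((((((Equiv.sigmaEquivProd Fv A).symm.trans
      (Equiv.sigmaCongrRight EA)).trans E1.symm).trans E2).trans
      (Equiv.sigmaCongrRight EC)).trans E2'.symm).trans E1').trans
      (Equiv.sigmaCongrRight fun ψ => (EB ψ).symm)).trans (Equiv.sigmaEquivProd Fψ A')
  haveI := Module.Free.of_divisionRing k (Module.Dual k V)
  have eD : V ≃ₗ[k] Module.Dual k V := LinearEquiv.ofFinrankEq _ _ (Subspace.dual_finrank_eq).symm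
  have hFvFψ : Nat.card Fv = Nat.card Fψ :=
    Nat.card_congr (eD.toEquiv.subtypeEquiv fun v => not_congr (LinearEquiv.map_eq_zero_iff eD).symm)
  have hcard := Nat.card_congr chain
  rw [Nat.card_prod, Nat.card_prod, hFvFψ] at hcard
  haveI : Nonempty Fψ := ⟨⟨eD v₀, by
    rw [Ne, LinearEquiv.map_eq_zero_iff]; exact hv₀⟩⟩
  have hpos : 0 < Nat.card Fψ := Nat.card_pos
  have hABcard : Nat.card A = Nat.card A' := Nat.eq_of_mul_eq_mul_left hpos hcard
  rw [← Nat.card_coe_set_eq, ← Nat.card_coe_set_eq]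
  exact hABcard

end Main2


private lemma exists_good_pair {k V : Type*} [Field k] [Fintype k] [AddCommGroup V] [Module k V]
    [FiniteDimensional k V]
    {q d : ℕ} (hq : Fintype.card k = q) (hd : Module.finrank k V = d) (hd2 : 2 ≤ d)
    (hqd : ¬(q = 2 ∧ d = 2)) {w : V} (hw : w ≠ 0) {φ : V →ₗ[k] k} (hφ : φ ≠ 0) :
    ∃ w', w' ∈ LinearMap.ker φ ∧ w' ≠ 0 ∧
      ∃ ψ : Module.Dual k V, ψ w ≠ 0 ∧ 1 + ψ w' ≠ 0 := by
  classical
  have hrange : finrank k (LinearMap.range φ) ≤ 1 :=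
    (Submodule.finrank_le _).trans (le_of_eq (Module.finrank_self k))
  have hrn := LinearMap.finrank_range_add_finrank_ker φ
  rw [hd] at hrn
  have hkerfr : d - 1 ≤ finrank k (LinearMap.ker φ) := by omega
  have hkerpos : ∃ u, u ∈ LinearMap.ker φ ∧ u ≠ 0 := by
    have hne : LinearMap.ker φ ≠ ⊥ := by
      intro hbot
      rw [hbot, finrank_bot] at hkerfr
      omega
    obtain ⟨u, hu, hune⟩ := Submodule.exists_mem_ne_zero_of_ne_bot hne
    exact ⟨u, hu, hune⟩
  by_cases hcase : ∃ u, u ∈ LinearMap.ker φ ∧ u ∉ Submodule.span k {w}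
  · obtain ⟨w', hker, hspan⟩ := hcase
    have hw'ne : w' ≠ 0 := fun h => hspan (h ▸ Submodule.zero_mem _)
    have hwsp : w ∉ Submodule.span k {w'} := by
      intro hmem
      obtain ⟨c, hc⟩ := Submodule.mem_span_singleton.1 hmem
      have hcne : c ≠ 0 := fun h => hw (by rw [← hc, h, zero_smul])
      exact hspan (Submodule.mem_span_singleton.2
        ⟨c⁻¹, by rw [← hc, smul_smul, inv_mul_cancel₀ hcne, one_smul]⟩)
    obtain ⟨ψ, hψ, hmap⟩ := Submodule.exists_dual_map_eq_bot_of_notMem hwsp inferInstance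
    have hψw' : ψ w' = 0 := by
      have h2 : ψ w' ∈ (Submodule.span k {w'}).map ψ :=
        Submodule.mem_map_of_mem (Submodule.mem_span_singleton_self w')
      rw [hmap] at h2
      exact (Submodule.mem_bot k).mp h2
    exact ⟨w', hker, hw'ne, ψ, hψ, by rw [hψw', add_zero]; exact one_ne_zero⟩
  · push_neg at hcase
    obtain ⟨w', hker, hw'ne⟩ := hkerpos
    obtain ⟨c, hc⟩ := Submodule.mem_span_singleton.1 (hcase w' hker)
    have hcne : c ≠ 0 := fun h => hw'ne (by rw [← hc, h, zero_smul])
    have hsub : LinearMap.ker φ ≤ Submodule.span k {w} := fun u hu => hcase u hu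
    have hle : finrank k (LinearMap.ker φ) ≤ 1 :=
      (Submodule.finrank_mono hsub).trans (le_of_eq (finrank_span_singleton hw))
    have hd2' : d = 2 := by omega
    have hq3 : 3 ≤ Fintype.card k := by
      have h1 := Fintype.one_lt_card (α := k)
      have hq2 : q ≠ 2 := fun h => hqd ⟨h, hd2'⟩
      omega
    obtain ⟨t, ht0, htc⟩ : ∃ t : k, t ≠ 0 ∧ t ≠ -c⁻¹ := by
      by_contra hall
      push_neg at hall
      have hsub2 : (Finset.univ : Finset k) ⊆ {0, -c⁻¹} := by
        intro t _
        simp only [Finset.mem_insert, Finset.mem_singleton]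
        by_cases h : t = 0
        · exact Or.inl h
        · exact Or.inr (hall t h)
      have h3 := Finset.card_le_card hsub2
      have h2 : ({0, -c⁻¹} : Finset k).card ≤ 2 :=
        (Finset.card_insert_le _ _).trans (by simp)
      rw [Finset.card_univ] at h3
      omega
    have hwbot : w ∉ (⊥ : Submodule k V) := by simpa using hw
    obtain ⟨ψ₀, hψ₀, -⟩ := Submodule.exists_dual_map_eq_bot_of_notMem hwbot inferInstance
    refine ⟨w', hker, hw'ne, (t * (ψ₀ w)⁻¹) • ψ₀, ?_, ?_⟩
    · simp only [LinearMap.smul_apply, smul_eq_mul]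
      field_simp
      exact ht0
    · have hcomp : ((t * (ψ₀ w)⁻¹) • ψ₀) w' = t * c := by
        simp only [LinearMap.smul_apply, smul_eq_mul, ← hc, map_smul, smul_eq_mul]
        field_simp [hψ₀]
      rw [hcomp]
      intro habs
      apply htc
      have h1 : t * c = -1 := by linear_combination habs
      field_simp
      linear_combination h1


section Main3

variable {k : Type*} [Field k] [Fintype k] {V : Type*} [AddCommGroup V] [Module k V]
  [FiniteDimensional k V]

local notation "G" => LinearMap.GeneralLinearGroup k V

private lemma nonconj_main {q d : ℕ} (hq : Fintype.card k = q)
    (hd : Module.finrank k V = d)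
    {v₀ : V} (hv₀ : v₀ ≠ 0) {φ : V →ₗ[k] k} (hφ : φ ≠ 0)
    (H H' : Subgroup (LinearMap.GeneralLinearGroup k V))
    (hH : ∀ g : G, g ∈ H ↔ (g : V →ₗ[k] V) v₀ = v₀)
    (hH' : ∀ g : G, g ∈ H' ↔ φ.comp (g : V →ₗ[k] V) = φ)
    (hd2 : 2 ≤ d) (hqd : ¬(q = 2 ∧ d = 2)) :
    ¬ ∃ g : G, H.map (MulAut.conj g).toMonoidHom = H' := by
  rintro ⟨g, hg⟩
  set w : V := (g : V →ₗ[k] V) v₀ with hw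
  have hwne : w ≠ 0 := by
    intro h0
    apply hv₀
    have h1 := inv_apply_of_apply (c := g) (a := v₀) (b := w) rfl
    rw [h0, map_zero] at h1
    exact h1.symm
  have hmem : ∀ y : G, y ∈ H' ↔ (y : V →ₗ[k] V) w = w := by
    intro y
    rw [← hg, Subgroup.mem_map]
    constructor
    · rintro ⟨x, hx, rfl⟩
      have h1 : (MulAut.conj g).toMonoidHom x = g * x * g⁻¹ := rfl
      rw [h1]
      exact conj_fix g x rfl ((hH x).1 hx)
    · intro hy
      refine ⟨g⁻¹ * y * g, (hH _).2 ?_, ?_⟩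
      · have h1 := conj_fix g⁻¹ y (inv_apply_of_apply (c := g) rfl) hy
        rwa [inv_inv] at h1
      · show (MulAut.conj g) (g⁻¹ * y * g) = y
        rw [MulAut.conj_apply]
        group
  obtain ⟨w', hw'ker, hw'ne, ψ, hψw, hψs⟩ := exists_good_pair hq hd hd2 hqd hwne hφ
  have hφw' : φ w' = 0 := LinearMap.mem_ker.mp hw'ker
  let T : V →ₗ[k] V := LinearMap.id + ψ.smulRight w'
  let T' : V →ₗ[k] V := LinearMap.id - (1 + ψ w')⁻¹ • ψ.smulRight w'
  have hTT' : T * T' = 1 := by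
    ext v
    simp only [T, T', Module.End.mul_apply, LinearMap.add_apply, LinearMap.sub_apply,
      LinearMap.id_apply, LinearMap.smul_apply, LinearMap.smulRight_apply, Module.End.one_apply,
      map_sub, map_smul, smul_smul, smul_eq_mul, map_add]
    match_scalars
    · ring
    · field_simp
      ring
  have hT'T : T' * T = 1 := by
    ext v
    simp only [T, T', Module.End.mul_apply, LinearMap.add_apply, LinearMap.sub_apply,
      LinearMap.id_apply, LinearMap.smul_apply, LinearMap.smulRight_apply, Module.End.one_apply,
      map_sub, map_smul, smul_smul, smul_eq_mul, map_add]
    match_scalars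
    · ring
    · field_simp
      ring
  let y : G := ⟨T, T', hTT', hT'T⟩
  have hyH' : y ∈ H' := by
    rw [hH']
    ext v
    simp only [LinearMap.comp_apply]
    show φ (T v) = φ v
    simp [T, map_add, map_smul, hφw']
  have hyw : (y : V →ₗ[k] V) w = w := (hmem y).1 hyH'
  have : T w = w := hyw
  have h2 : ψ w • w' = 0 := by
    have h3 : w + ψ w • w' = w := by
      simpa [T, LinearMap.add_apply, LinearMap.id_apply, LinearMap.smulRight_apply] using this
    exact add_eq_left.mp h3
  rcases smul_eq_zero.mp h2 with h | h
  · exact hψw h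
  · exact hw'ne h

end Main3

/-- let `k` be a finite field with `q` elements, `V` a `k`-vector space of
finite dimension `d ≥ 1`, `H` the stabilizer in `GL(V)` of a nonzero vector `v₀`, and `H'`
the stabilizer of a nonzero linear functional `φ`.  Then `H` and `H'` are Gassmann-Sunada
equivalent in `GL(V)`, and if `d ≥ 2` and `(q,d) ≠ (2,2)` they are not conjugate. -/
theorem gassmannEquivalent_stabilizers_GL {k : Type*} [Field k] [Fintype k]
    {q d : ℕ} (hq : Fintype.card k = q)
    {V : Type*} [AddCommGroup V] [Module k V] [FiniteDimensional k V]
    (hd : Module.finrank k V = d) (hd1 : 1 ≤ d)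
    (v₀ : V) (hv₀ : v₀ ≠ 0) (φ : V →ₗ[k] k) (hφ : φ ≠ 0)
    (H H' : Subgroup (LinearMap.GeneralLinearGroup k V))
    (hH : ∀ g : LinearMap.GeneralLinearGroup k V, g ∈ H ↔ (g : V →ₗ[k] V) v₀ = v₀)
    (hH' : ∀ g : LinearMap.GeneralLinearGroup k V, g ∈ H' ↔ φ.comp (g : V →ₗ[k] V) = φ) :
    GassmannEquivalent H H' ∧
      (2 ≤ d → ¬(q = 2 ∧ d = 2) →
        ¬ ∃ g : LinearMap.GeneralLinearGroup k V,
            H.map (MulAut.conj g).toMonoidHom = H') := by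
  exact ⟨gassmann_main hv₀ hφ H H' hH hH',
    fun hd2 hqd => nonconj_main hq hd hv₀ hφ H H' hH hH' hd2 hqd⟩
end

section
/- Let k be a finite field with q elements and let V be a k-vector space of finite dimension d with d ≥ 2 and (q,d) ≠ (2,2). Let v₀ ∈ V be a nonzero vector and φ : V → k a nonzero linear functional, and set H = {g ∈ GL(V) : g v₀ = v₀} and H' = {g ∈ GL(V) : φ ∘ g = φ}. In the affine group V ⋊ GL(V) (with multiplication (v,g)(v',g') = (v + g v', g g')), the subgroups V ⋊ H and V ⋊ H' are Gassmann-Sunada equivalent but NOT jump equivalent; that is, (V ⋊ GL(V), V ⋊ H, V ⋊ H') is a Gassmann-Sunada triple that is not a jump triple. -/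
/-! ### Auxiliary general counting lemmas -/

open Module

section Counting

/-- If all fibers of `p` over `F` have cardinality `c`, then the preimage of `F`
has cardinality `c * #F`. -/
lemma card_preimage_of_fiber_const {Γ X : Type*} [Finite Γ] [Finite X] (p : Γ → X) (F : Set X)
    (c : ℕ) (hfib : ∀ w ∈ F, Nat.card {u : Γ // p u = w} = c) :
    Nat.card {u : Γ // p u ∈ F} = c * Nat.card F := by
  classical
  have e : {u : Γ // p u ∈ F} ≃ Σ w : F, {u : Γ // p u = (w : X)} :=
    { toFun := fun u => ⟨⟨p u.1, u.2⟩, ⟨u.1, rfl⟩⟩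
      invFun := fun z => ⟨z.2.1, by rw [z.2.2]; exact z.1.2⟩
      left_inv := fun u => rfl
      right_inv := fun z => by
        obtain ⟨⟨w, hw⟩, ⟨u, hu⟩⟩ := z
        simp only at hu
        subst hu
        rfl }
  haveI : Fintype F := Fintype.ofFinite _
  haveI : ∀ w : F, Fintype {u : Γ // p u = (w : X)} := fun w => Fintype.ofFinite _
  rw [Nat.card_congr e, Nat.card_eq_fintype_card, Fintype.card_sigma]
  have : ∀ w : F, Fintype.card {u : Γ // p u = (w : X)} = c := by
    intro w
    rw [← Nat.card_eq_fintype_card]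
    exact hfib w w.2
  rw [Finset.sum_congr rfl (fun w _ => this w), Finset.sum_const, Finset.card_univ,
    Nat.card_eq_fintype_card, smul_eq_mul, mul_comm]

/-- Double counting of pairs `(x, g)` with `g ∈ S` and `xgx⁻¹ ∈ B`. -/
lemma gassmann_of_conjcount {G : Type*} [Group G] [Finite G] (A A' : Subgroup G)
    (h : ∀ g : G, Nat.card {x : G // x * g * x⁻¹ ∈ A}
      = Nat.card {x : G // x * g * x⁻¹ ∈ A'}) :
    GassmannEquivalent A A' := by
  classical
  intro S hS
  have hmem : ∀ (y a : G), a ∈ S → y * a * y⁻¹ ∈ S := fun y a ha => by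
    rw [← hS y]
    exact ⟨a, ha, rfl⟩
  have E1 : ∀ B : Subgroup G,
      {p : G × G // p.2 ∈ S ∧ p.1 * p.2 * p.1⁻¹ ∈ B} ≃ G × ((B : Set G) ∩ S : Set G) :=
    fun B =>
    { toFun := fun p => (p.1.1, ⟨p.1.1 * p.1.2 * p.1.1⁻¹, ⟨p.2.2, hmem _ _ p.2.1⟩⟩)
      invFun := fun z => ⟨(z.1, z.1⁻¹ * z.2.1 * z.1),
        ⟨by simpa using hmem z.1⁻¹ z.2.1 z.2.2.2, by
          have hz : z.1 * (z.1⁻¹ * z.2.1 * z.1) * z.1⁻¹ = z.2.1 := by group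
          rw [hz]; exact z.2.2.1⟩⟩
      left_inv := fun p => Subtype.ext (Prod.ext rfl (by group))
      right_inv := fun z => by
        refine Prod.ext rfl (Subtype.ext ?_)
        show z.1 * (z.1⁻¹ * z.2.1 * z.1) * z.1⁻¹ = z.2.1
        group }
  have E2 : ∀ B : Subgroup G,
      {p : G × G // p.2 ∈ S ∧ p.1 * p.2 * p.1⁻¹ ∈ B}
        ≃ Σ g : G, {x : G // g ∈ S ∧ x * g * x⁻¹ ∈ B} :=
    fun B =>
    { toFun := fun p => ⟨p.1.2, ⟨p.1.1, p.2⟩⟩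
      invFun := fun z => ⟨(z.2.1, z.1), z.2.2⟩
      left_inv := fun p => rfl
      right_inv := fun z => rfl }
  haveI := Fintype.ofFinite G
  haveI : ∀ (B : Subgroup G) (g : G), Fintype {x : G // g ∈ S ∧ x * g * x⁻¹ ∈ B} :=
    fun B g => Fintype.ofFinite _
  have hfib : ∀ (B B' : Subgroup G),
      (∀ g : G, Nat.card {x : G // x * g * x⁻¹ ∈ B} = Nat.card {x : G // x * g * x⁻¹ ∈ B'}) →
      ∀ g : G, Nat.card {x : G // g ∈ S ∧ x * g * x⁻¹ ∈ B}
        = Nat.card {x : G // g ∈ S ∧ x * g * x⁻¹ ∈ B'} := by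
    intro B B' hBB' g
    by_cases hg : g ∈ S
    · rw [Nat.card_congr (Equiv.subtypeEquivRight (fun x => and_iff_right hg)),
        Nat.card_congr (Equiv.subtypeEquivRight (fun x => and_iff_right hg))]
      exact hBB' g
    · haveI : IsEmpty {x : G // g ∈ S ∧ x * g * x⁻¹ ∈ B} := ⟨fun x => hg x.2.1⟩
      haveI : IsEmpty {x : G // g ∈ S ∧ x * g * x⁻¹ ∈ B'} := ⟨fun x => hg x.2.1⟩
      simp
  have key : ∀ B : Subgroup G,
      Nat.card G * ((B : Set G) ∩ S).ncard
        = ∑ g : G, Nat.card {x : G // g ∈ S ∧ x * g * x⁻¹ ∈ B} := by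
    intro B
    rw [← Nat.card_coe_set_eq, ← Nat.card_prod, ← Nat.card_congr (E1 B),
      Nat.card_congr (E2 B), Nat.card_eq_fintype_card, Fintype.card_sigma]
    exact Finset.sum_congr rfl (fun g _ => (Nat.card_eq_fintype_card).symm)
  have hsum : Nat.card G * ((A : Set G) ∩ S).ncard = Nat.card G * ((A' : Set G) ∩ S).ncard := by
    rw [key A, key A']
    exact Finset.sum_congr rfl (fun g _ => hfib A A' h g)
  have hpos : 0 < Nat.card G := Nat.card_pos
  exact Nat.eq_of_mul_eq_mul_left hpos hsum

end Counting

/-! ### Linear algebra auxiliary lemmas -/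

section LinAux

variable {k : Type*} [Field k] {V : Type*} [AddCommGroup V] [Module k V] [FiniteDimensional k V]

omit [FiniteDimensional k V] in
lemma lmul_apply (e₁ e₂ : V ≃ₗ[k] V) (x : V) : (e₁ * e₂) x = e₁ (e₂ x) := rfl

omit [FiniteDimensional k V] in
lemma linv_apply (e : V ≃ₗ[k] V) (x : V) : e⁻¹ x = e.symm x := rfl

/-- `GL(V)` acts transitively on nonzero vectors. -/
lemma exists_linearEquiv_apply_eq {v w : V} (hv : v ≠ 0) (hw : w ≠ 0) :
    ∃ u : V ≃ₗ[k] V, u v = w := by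
  classical
  have hv' : LinearIndepOn k id ({v} : Set V) := (linearIndepOn_singleton_iff k).mpr hv
  have hw' : LinearIndepOn k id ({w} : Set V) := (linearIndepOn_singleton_iff k).mpr hw
  let b := Basis.extend hv'
  let c := Basis.extend hw'
  haveI : Fintype (hv'.extend (Set.subset_univ _)) := FiniteDimensional.fintypeBasisIndex b
  haveI : Fintype (hw'.extend (Set.subset_univ _)) := FiniteDimensional.fintypeBasisIndex c
  have hcard : Fintype.card (hv'.extend (Set.subset_univ _))
      = Fintype.card (hw'.extend (Set.subset_univ _)) := by
    rw [← Module.finrank_eq_card_basis b, ← Module.finrank_eq_card_basis c]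
  have hvmem : v ∈ hv'.extend (Set.subset_univ _) := hv'.subset_extend _ rfl
  have hwmem : w ∈ hw'.extend (Set.subset_univ _) := hw'.subset_extend _ rfl
  let e0 := Fintype.equivOfCardEq hcard
  let e := e0.trans (Equiv.swap (e0 ⟨v, hvmem⟩) ⟨w, hwmem⟩)
  refine ⟨b.equiv c e, ?_⟩
  have h1 : b ⟨v, hvmem⟩ = v := Basis.extend_apply_self hv' ⟨v, hvmem⟩
  have h2 : c ⟨w, hwmem⟩ = w := Basis.extend_apply_self hw' ⟨w, hwmem⟩
  have h3 : e ⟨v, hvmem⟩ = ⟨w, hwmem⟩ := by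
    simp only [e, Equiv.trans_apply, Equiv.swap_apply_left]
  calc b.equiv c e v = b.equiv c e (b ⟨v, hvmem⟩) := by rw [h1]
    _ = c (e ⟨v, hvmem⟩) := b.equiv_apply _ c e
    _ = w := by rw [h3, h2]

/-- `GL(V)` acts transitively on nonzero functionals. -/
lemma exists_linearEquiv_comp_eq {ψ χ : Module.Dual k V} (hψ : ψ ≠ 0) (hχ : χ ≠ 0) :
    ∃ u : V ≃ₗ[k] V, ∀ x, ψ (u x) = χ x := by
  obtain ⟨U, hU⟩ := exists_linearEquiv_apply_eq (V := Module.Dual k V) (k := k) hψ hχ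
  refine ⟨(Module.evalEquiv k V).trans (U.dualMap.trans (Module.evalEquiv k V).symm), fun x => ?_⟩
  simp only [LinearEquiv.trans_apply]
  rw [Module.apply_evalEquiv_symm_apply, LinearEquiv.dualMap_apply, hU]
  simp

variable [Finite k]

lemma finite_linearEquiv : Finite (V ≃ₗ[k] V) := by
  haveI : Finite V := Module.finite_of_finite k
  exact Finite.of_injective (fun u : V ≃ₗ[k] V => (u : V → V))
    (fun a b h => LinearEquiv.ext (congrFun h))

lemma card_conjfix_vec (v₀ : V) (hv₀ : v₀ ≠ 0) (F : Set V) (hF : ∀ w ∈ F, w ≠ 0) :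
    Nat.card {u : V ≃ₗ[k] V // (u⁻¹ : V ≃ₗ[k] V) v₀ ∈ F}
      = Nat.card {u : V ≃ₗ[k] V // u v₀ = v₀} * Nat.card F := by
  haveI : Finite V := Module.finite_of_finite k
  haveI : Finite (V ≃ₗ[k] V) := finite_linearEquiv (k := k) (V := V)
  apply card_preimage_of_fiber_const
  intro w hw
  obtain ⟨u₁, hu₁⟩ := exists_linearEquiv_apply_eq (k := k) (hF w hw) hv₀
  apply Nat.card_congr
  refine
    { toFun := fun x => ⟨x.1 * u₁⁻¹, ?_⟩
      invFun := fun t => ⟨t.1 * u₁, ?_⟩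
      left_inv := fun x => Subtype.ext (by group)
      right_inv := fun t => Subtype.ext (by group) }
  · obtain ⟨x, hx⟩ := x
    have hxw : x w = v₀ := by
      rw [← hx, linv_apply, x.apply_symm_apply]
    have h1 : (u₁⁻¹ : V ≃ₗ[k] V) v₀ = w := by
      rw [linv_apply, ← hu₁, u₁.symm_apply_apply]
    show (x * u₁⁻¹) v₀ = v₀
    rw [lmul_apply, h1, hxw]
  · obtain ⟨t, ht⟩ := t
    show ((t * u₁)⁻¹ : V ≃ₗ[k] V) v₀ = w
    have h2 : (t⁻¹ : V ≃ₗ[k] V) v₀ = v₀ := by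
      rw [linv_apply]; exact (LinearEquiv.symm_apply_eq t).mpr ht.symm
    rw [mul_inv_rev, lmul_apply, h2, linv_apply, ← hu₁, u₁.symm_apply_apply]

lemma card_conjfix_dual (φ : Module.Dual k V) (hφ : φ ≠ 0) (F : Set (Module.Dual k V))
    (hF : ∀ χ ∈ F, χ ≠ 0) :
    Nat.card {u : V ≃ₗ[k] V // (φ.comp (u : V →ₗ[k] V)) ∈ F}
      = Nat.card {u : V ≃ₗ[k] V // φ.comp (u : V →ₗ[k] V) = φ} * Nat.card F := by
  haveI : Finite V := Module.finite_of_finite k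
  haveI : Finite (V ≃ₗ[k] V) := finite_linearEquiv (k := k) (V := V)
  haveI : Finite (Module.Dual k V) := Module.finite_of_finite k
  apply card_preimage_of_fiber_const
  intro χ hχ
  obtain ⟨u₁, hu₁⟩ := exists_linearEquiv_comp_eq hφ (hF χ hχ)
  apply Nat.card_congr
  refine
    { toFun := fun x => ⟨x.1 * u₁⁻¹, ?_⟩
      invFun := fun t => ⟨t.1 * u₁, ?_⟩
      left_inv := fun x => Subtype.ext (by group)
      right_inv := fun t => Subtype.ext (by group) }
  · obtain ⟨x, hx⟩ := x
    refine LinearMap.ext fun y => ?_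
    have hx' : ∀ z, φ (x z) = χ z := fun z => by
      have := congrArg (fun (ψ : Module.Dual k V) => ψ z) hx
      simpa using this
    show φ ((x * u₁⁻¹) y) = φ y
    rw [lmul_apply, hx']
    show χ (u₁.symm y) = φ y
    rw [← hu₁ (u₁.symm y), u₁.apply_symm_apply]
  · obtain ⟨t, ht⟩ := t
    have ht' : ∀ z, φ (t z) = φ z := fun z => by
      have := congrArg (fun (ψ : Module.Dual k V) => ψ z) ht
      simpa using this
    refine LinearMap.ext fun y => ?_
    show φ ((t * u₁) y) = χ y
    rw [lmul_apply, ht', hu₁]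

omit [Finite k] in
lemma finrank_ker_dualMap (f : V →ₗ[k] V) :
    finrank k (LinearMap.ker f.dualMap) = finrank k (LinearMap.ker f) := by
  have h1 := LinearMap.finrank_range_add_finrank_ker f
  have h2 := LinearMap.finrank_range_add_finrank_ker f.dualMap
  have h3 := LinearMap.finrank_range_dualMap_eq_finrank_range f
  have h4 : finrank k (Module.Dual k V) = finrank k V := Subspace.dual_finrank_eq
  omega

end LinAux

section CardAux

variable {k : Type*} [Field k] [Fintype k]
variable {V : Type*} [AddCommGroup V] [Module k V] [FiniteDimensional k V]

lemma card_nonzero_mem (p : Submodule k V) :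
    Nat.card ({w : V | w ≠ 0 ∧ w ∈ p}) = Fintype.card k ^ finrank k p - 1 := by
  classical
  haveI : Finite V := Module.finite_of_finite k
  haveI : Fintype V := Fintype.ofFinite V
  haveI : Fintype p := Fintype.ofFinite p
  have e : ({w : V | w ≠ 0 ∧ w ∈ p}) ≃ {x : p // ¬(x = 0)} :=
    { toFun := fun w => ⟨⟨w.1, w.2.2⟩, fun h => w.2.1 (congrArg Subtype.val h)⟩
      invFun := fun x => ⟨x.1.1, ⟨fun h => x.2 (Subtype.ext h), x.1.2⟩⟩
      left_inv := fun w => rfl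
      right_inv := fun x => rfl }
  rw [Nat.card_congr e, Nat.card_eq_fintype_card, Fintype.card_subtype_compl,
    Fintype.card_subtype_eq, ← card_eq_pow_finrank (K := k) (V := p)]

lemma card_nonzero_set :
    Nat.card ({w : V | w ≠ 0}) = Fintype.card k ^ finrank k V - 1 := by
  have h := card_nonzero_mem (k := k) (V := V) ⊤
  rw [show ({w : V | w ≠ 0} : Set V) = {w : V | w ≠ 0 ∧ w ∈ (⊤ : Submodule k V)} from
    Set.ext fun w => (and_iff_left Submodule.mem_top).symm, h, finrank_top]

lemma card_fix_eq (m : V ≃ₗ[k] V) :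
    Nat.card ({w : V | w ≠ 0 ∧ m w = w})
      = Nat.card ({ψ : Module.Dual k V | ψ ≠ 0 ∧ ∀ x, ψ (m x) = ψ x}) := by
  set f : V →ₗ[k] V := (m : V →ₗ[k] V) - LinearMap.id with hf
  have hmem1 : ∀ w : V, (m w = w) ↔ w ∈ LinearMap.ker f := fun w => by
    rw [LinearMap.mem_ker, hf, LinearMap.sub_apply, LinearMap.id_apply, sub_eq_zero,
      LinearEquiv.coe_coe]
  have hmem2 : ∀ ψ : Module.Dual k V, (∀ x, ψ (m x) = ψ x) ↔ ψ ∈ LinearMap.ker f.dualMap := by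
    intro ψ
    rw [LinearMap.mem_ker]
    constructor
    · intro h
      apply LinearMap.ext
      intro x
      rw [LinearMap.dualMap_apply, hf, LinearMap.sub_apply, LinearMap.id_apply, map_sub,
        LinearEquiv.coe_coe, h x, sub_self, LinearMap.zero_apply]
    · intro h x
      have := LinearMap.ext_iff.mp h x
      rw [LinearMap.dualMap_apply, hf, LinearMap.sub_apply, LinearMap.id_apply, map_sub,
        LinearEquiv.coe_coe, LinearMap.zero_apply, sub_eq_zero] at this
      exact this
  have c1 : Nat.card ({w : V | w ≠ 0 ∧ m w = w})
      = Fintype.card k ^ finrank k (LinearMap.ker f) - 1 := by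
    rw [show ({w : V | w ≠ 0 ∧ m w = w} : Set V) = {w : V | w ≠ 0 ∧ w ∈ LinearMap.ker f} from
      Set.ext fun w => and_congr_right fun _ => hmem1 w]
    exact card_nonzero_mem (LinearMap.ker f)
  have c2 : Nat.card ({ψ : Module.Dual k V | ψ ≠ 0 ∧ ∀ x, ψ (m x) = ψ x})
      = Fintype.card k ^ finrank k (LinearMap.ker f.dualMap) - 1 := by
    rw [show ({ψ : Module.Dual k V | ψ ≠ 0 ∧ ∀ x, ψ (m x) = ψ x} : Set (Module.Dual k V))
        = {ψ : Module.Dual k V | ψ ≠ 0 ∧ ψ ∈ LinearMap.ker f.dualMap} from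
      Set.ext fun ψ => and_congr_right fun _ => hmem2 ψ]
    exact card_nonzero_mem (LinearMap.ker f.dualMap)
  rw [c1, c2, finrank_ker_dualMap]

lemma comp_ne_zero (φ : Module.Dual k V) (hφ : φ ≠ 0) (u : V ≃ₗ[k] V) :
    φ.comp (u : V →ₗ[k] V) ≠ 0 := by
  intro hz
  apply hφ
  apply LinearMap.ext
  intro x
  have h' := LinearMap.ext_iff.mp hz (u.symm x)
  rw [LinearMap.comp_apply, LinearEquiv.coe_coe, u.apply_symm_apply, LinearMap.zero_apply] at h'
  rw [h', LinearMap.zero_apply]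

lemma stab_card_eq (v₀ : V) (hv₀ : v₀ ≠ 0) (φ : Module.Dual k V) (hφ : φ ≠ 0) :
    Nat.card {u : V ≃ₗ[k] V // u v₀ = v₀}
      = Nat.card {u : V ≃ₗ[k] V // φ.comp (u : V →ₗ[k] V) = φ} := by
  have hV := card_conjfix_vec (k := k) v₀ hv₀ {w : V | w ≠ 0} (fun w hw => hw)
  have hD := card_conjfix_dual (k := k) φ hφ {ψ : Module.Dual k V | ψ ≠ 0} (fun χ hχ => hχ)
  have h1 : Nat.card {u : V ≃ₗ[k] V // (u⁻¹ : V ≃ₗ[k] V) v₀ ∈ {w : V | w ≠ 0}}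
      = Nat.card (V ≃ₗ[k] V) :=
    Nat.card_congr (Equiv.subtypeUnivEquiv
      (fun u => (LinearEquiv.map_ne_zero_iff (u⁻¹ : V ≃ₗ[k] V)).mpr hv₀))
  have h2 : Nat.card {u : V ≃ₗ[k] V // (φ.comp (u : V →ₗ[k] V)) ∈ {ψ : Module.Dual k V | ψ ≠ 0}}
      = Nat.card (V ≃ₗ[k] V) :=
    Nat.card_congr (Equiv.subtypeUnivEquiv (fun u => comp_ne_zero φ hφ u))
  rw [h1] at hV
  rw [h2] at hD
  have hcards : Nat.card ({w : V | w ≠ 0}) = Nat.card ({ψ : Module.Dual k V | ψ ≠ 0}) := by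
    rw [card_nonzero_set (k := k) (V := V), card_nonzero_set (k := k) (V := Module.Dual k V), Subspace.dual_finrank_eq]
  rw [← hcards] at hD
  have hpos : 0 < Nat.card ({w : V | w ≠ 0}) := by
    haveI : Finite V := Module.finite_of_finite k
    haveI : Nonempty ({w : V | w ≠ 0}) := ⟨⟨v₀, hv₀⟩⟩
    exact Nat.card_pos
  exact Nat.eq_of_mul_eq_mul_right hpos (hV.symm.trans hD)

end CardAux

/-! ### Affine group auxiliary lemmas -/

section AffAux

variable {k : Type*} [Field k]
variable {V : Type*} [AddCommGroup V] [Module k V]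

lemma affine_apply_eq (f : V ≃ᵃ[k] V) (v : V) : f v = f.linear v + f 0 := by
  have := f.map_vadd 0 v
  simpa [vadd_eq_add] using this

lemma affine_mul_linear (a b : V ≃ᵃ[k] V) : (a * b).linear = a.linear * b.linear := rfl

lemma affine_inv_linear (a : V ≃ᵃ[k] V) : (a⁻¹).linear = (a.linear)⁻¹ := rfl

lemma affine_mul_apply (a b : V ≃ᵃ[k] V) (v : V) : (a * b) v = a (b v) := rfl

/-- Cardinality of the set of affine maps whose linear part satisfies `P`. -/
lemma card_linear_cond [Fintype k] [FiniteDimensional k V] (P : (V ≃ₗ[k] V) → Prop) :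
    Nat.card {f : V ≃ᵃ[k] V // P f.linear}
      = Nat.card V * Nat.card {u : V ≃ₗ[k] V // P u} := by
  have e : {f : V ≃ᵃ[k] V // P f.linear} ≃ V × {u : V ≃ₗ[k] V // P u} :=
    { toFun := fun f => (f.1 0, ⟨f.1.linear, f.2⟩)
      invFun := fun z => ⟨(z.2.1.toAffineEquiv).trans (AffineEquiv.constVAdd k V z.1), by
        have hlin : ((z.2.1.toAffineEquiv).trans (AffineEquiv.constVAdd k V z.1)).linear
            = z.2.1 := LinearEquiv.ext fun x => rfl
        rw [hlin]; exact z.2.2⟩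
      left_inv := fun f => Subtype.ext (AffineEquiv.ext fun v => by
        show f.1 0 +ᵥ f.1.linear v = f.1 v
        rw [affine_apply_eq f.1 v, vadd_eq_add, add_comm])
      right_inv := fun z => by
        refine Prod.ext ?_ (Subtype.ext (LinearEquiv.ext fun x => rfl))
        show z.1 +ᵥ z.2.1 0 = z.1
        simp }
  rw [Nat.card_congr e, Nat.card_prod]

end AffAux

/-! ### The key conjugation-count identity -/

section KeyCount

variable {k : Type*} [Field k] [Fintype k]
variable {V : Type*} [AddCommGroup V] [Module k V] [FiniteDimensional k V]

lemma key_count (v₀ : V) (hv₀ : v₀ ≠ 0) (φ : Module.Dual k V) (hφ : φ ≠ 0) (g : V ≃ᵃ[k] V) :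
    Nat.card {x : V ≃ᵃ[k] V // (x * g * x⁻¹).linear v₀ = v₀}
      = Nat.card {x : V ≃ᵃ[k] V // ∀ y, φ ((x * g * x⁻¹).linear y) = φ y} := by
  classical
  set m : V ≃ₗ[k] V := g.linear with hm
  have hlin : ∀ x : V ≃ᵃ[k] V, (x * g * x⁻¹).linear = x.linear * m * (x.linear)⁻¹ :=
    fun x => rfl
  set Fm : Set V := {w : V | w ≠ 0 ∧ m w = w} with hFm
  set F'm : Set (Module.Dual k V) := {ψ : Module.Dual k V | ψ ≠ 0 ∧ ∀ x, ψ (m x) = ψ x} with hF'm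
  have base : ∀ u : V ≃ₗ[k] V, (u * m * u⁻¹) v₀ = u (m (u.symm v₀)) := fun u => rfl
  -- LHS
  have iff1 : ∀ x : V ≃ᵃ[k] V,
      ((x * g * x⁻¹).linear v₀ = v₀) ↔ ((x.linear)⁻¹ : V ≃ₗ[k] V) v₀ ∈ Fm := by
    intro x
    rw [hlin x]
    set u := x.linear
    rw [base u]
    constructor
    · intro h
      refine ⟨(LinearEquiv.map_ne_zero_iff u.symm).mpr hv₀, ?_⟩
      show m ((u⁻¹ : V ≃ₗ[k] V) v₀) = (u⁻¹ : V ≃ₗ[k] V) v₀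
      rw [linv_apply]
      conv_rhs => rw [← h, u.symm_apply_apply]
    · rintro ⟨-, h⟩
      rw [show m (u.symm v₀) = u.symm v₀ from h, u.apply_symm_apply]
  have iff2 : ∀ x : V ≃ᵃ[k] V,
      (∀ y, φ ((x * g * x⁻¹).linear y) = φ y) ↔ φ.comp ((x.linear : V →ₗ[k] V)) ∈ F'm := by
    intro x
    simp only [hlin x]
    set u := x.linear
    constructor
    · intro h
      refine ⟨comp_ne_zero φ hφ u, fun z => ?_⟩
      have hz := h (u z)
      have : (u * m * u⁻¹) (u z) = u (m z) := by
        rw [show (u * m * u⁻¹) (u z) = u (m (u.symm (u z))) from rfl, u.symm_apply_apply]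
      rw [this] at hz
      simpa [LinearMap.comp_apply] using hz
    · rintro ⟨-, h⟩
      intro y
      have h1 : (u * m * u⁻¹) y = u (m (u.symm y)) := rfl
      have h2 : φ (u (m (u.symm y))) = φ (u (u.symm y)) := by
        have := h (u.symm y)
        simpa [LinearMap.comp_apply] using this
      rw [h1, h2, u.apply_symm_apply]
  rw [Nat.card_congr (Equiv.subtypeEquivRight iff1), Nat.card_congr (Equiv.subtypeEquivRight iff2),
    card_linear_cond (fun u : V ≃ₗ[k] V => (u⁻¹ : V ≃ₗ[k] V) v₀ ∈ Fm),
    card_linear_cond (fun u : V ≃ₗ[k] V => φ.comp ((u : V →ₗ[k] V)) ∈ F'm),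
    card_conjfix_vec v₀ hv₀ Fm (fun w hw => hw.1),
    card_conjfix_dual φ hφ F'm (fun χ hχ => hχ.1),
    stab_card_eq v₀ hv₀ φ hφ, card_fix_eq m]

end KeyCount

/-! ### Auxiliary lemmas for the jump part -/

section JumpAux

variable {k : Type*} [Field k] [Fintype k]
variable {V : Type*} [AddCommGroup V] [Module k V] [FiniteDimensional k V]

/-- Existence of a functional vanishing at `v₀`, nonzero, with value at `b` different from 1. -/
lemma exists_good_dual (hd2 : 2 ≤ finrank k V)
    (hne : ¬(Fintype.card k = 2 ∧ finrank k V = 2)) {v₀ : V} (hv₀ : v₀ ≠ 0) (b : V) :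
    ∃ ψ : Module.Dual k V, ψ v₀ = 0 ∧ ψ ≠ 0 ∧ ψ b ≠ 1 := by
  classical
  set ev : Module.Dual k V →ₗ[k] k := Module.Dual.eval k V v₀ with hev
  have hψ₁ : ∃ ψ₁ : Module.Dual k V, ψ₁ v₀ ≠ 0 := by
    by_contra h
    push_neg at h
    exact hv₀ ((Module.forall_dual_apply_eq_zero_iff k v₀).mp h)
  obtain ⟨ψ₁, hψ₁⟩ := hψ₁
  have hev_surj : Function.Surjective ev := by
    intro c
    refine ⟨(c * (ψ₁ v₀)⁻¹) • ψ₁, ?_⟩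
    show ((c * (ψ₁ v₀)⁻¹) • ψ₁) v₀ = c
    rw [LinearMap.smul_apply, smul_eq_mul]
    field_simp
  set Z := LinearMap.ker ev with hZdef
  have hZmem : ∀ ψ : Module.Dual k V, ψ ∈ Z ↔ ψ v₀ = 0 := fun ψ => by
    rw [hZdef, LinearMap.mem_ker]
    rfl
  have hrange : finrank k (LinearMap.range ev) = 1 := by
    rw [LinearMap.range_eq_top.mpr hev_surj, finrank_top, finrank_self]
  have hZrank : finrank k (LinearMap.range ev) + finrank k Z
      = finrank k (Module.Dual k V) := LinearMap.finrank_range_add_finrank_ker ev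
  have hdual : finrank k (Module.Dual k V) = finrank k V := Subspace.dual_finrank_eq
  have hZfin : finrank k Z + 1 = finrank k V := by omega
  obtain ⟨ψ₀, hψ₀Z, hψ₀⟩ : ∃ ψ₀, ψ₀ ∈ Z ∧ ψ₀ ≠ 0 := by
    apply Submodule.exists_mem_ne_zero_of_ne_bot
    intro hbot
    rw [hbot, finrank_bot] at hZfin
    omega
  by_contra hcon
  push_neg at hcon
  have hval : ∀ ψ, ψ ∈ Z → ψ ≠ 0 → ψ b = 1 := fun ψ hψ h0 =>
    hcon ψ ((hZmem ψ).mp hψ) h0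
  have huniq : ∀ ψ, ψ ∈ Z → ψ ≠ 0 → ψ = ψ₀ := by
    intro ψ hψ h0
    by_contra h1
    have hsub : ψ - ψ₀ ∈ Z := sub_mem hψ hψ₀Z
    have hne' : ψ - ψ₀ ≠ 0 := sub_ne_zero.mpr h1
    have hvv := hval _ hsub hne'
    rw [LinearMap.sub_apply, hval ψ hψ h0, hval ψ₀ hψ₀Z hψ₀, sub_self] at hvv
    exact zero_ne_one hvv
  have hcard2 : Fintype.card k = 2 := by
    have h2 : ∀ c : k, c ≠ 0 → c = 1 := by
      intro c hc
      have := hval (c • ψ₀) (Z.smul_mem c hψ₀Z) (smul_ne_zero hc hψ₀)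
      rw [LinearMap.smul_apply, hval ψ₀ hψ₀Z hψ₀, smul_eq_mul, mul_one] at this
      exact this
    have hsub : (Finset.univ : Finset k) ⊆ {0, 1} := by
      intro c _
      rcases eq_or_ne c 0 with h | h
      · simp [h]
      · simp [h2 c h]
    have hle : Fintype.card k ≤ 2 := by
      calc Fintype.card k = (Finset.univ : Finset k).card := rfl
        _ ≤ ({0, 1} : Finset k).card := Finset.card_le_card hsub
        _ ≤ 2 := by
          apply le_trans (Finset.card_insert_le _ _)
          simp
    have hge : 1 < Fintype.card k := Fintype.one_lt_card
    omega
  have hdim2 : finrank k V = 2 := by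
    have hZle : Z ≤ Submodule.span k {ψ₀} := by
      intro ψ hψ
      rcases eq_or_ne ψ 0 with h | h
      · rw [h]; exact zero_mem _
      · rw [huniq ψ hψ h]
        exact Submodule.mem_span_singleton_self ψ₀
    have hle1 : finrank k Z ≤ finrank k (Submodule.span k {ψ₀}) := Submodule.finrank_mono hZle
    rw [finrank_span_singleton hψ₀] at hle1
    omega
  exact hne ⟨hcard2, hdim2⟩

/-- A "shear-like" invertible map `x ↦ x - ψ(x) • b`, for `ψ b ≠ 1`. -/
lemma exists_shear (ψ : Module.Dual k V) (b : V) (h : ψ b ≠ 1) :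
    ∃ m : V ≃ₗ[k] V, ∀ x, m x = x - ψ x • b := by
  have hne : ψ b - 1 ≠ 0 := sub_ne_zero.mpr h
  refine ⟨LinearEquiv.ofLinear (LinearMap.id - ψ.smulRight b)
    (LinearMap.id - ((ψ b - 1)⁻¹) • ψ.smulRight b) ?_ ?_, fun x => ?_⟩
  · apply LinearMap.ext
    intro y
    simp only [LinearMap.comp_apply, LinearMap.sub_apply, LinearMap.id_apply,
      LinearMap.smul_apply, LinearMap.smulRight_apply, map_sub, map_smul, smul_eq_mul,
      LinearMap.id_coe, id_eq]
    match_scalars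
    · ring
    · field_simp
      ring
  · apply LinearMap.ext
    intro y
    simp only [LinearMap.comp_apply, LinearMap.sub_apply, LinearMap.id_apply,
      LinearMap.smul_apply, LinearMap.smulRight_apply, map_sub, map_smul, smul_eq_mul,
      LinearMap.id_coe, id_eq]
    match_scalars
    · ring
    · field_simp
      ring
  · simp [LinearEquiv.ofLinear_apply, LinearMap.sub_apply, LinearMap.smulRight_apply]

end JumpAux

/-- let `k` be a finite field with `q` elements and `V` a `k`-vector space of
dimension `d` with `d ≥ 2` and `(q,d) ≠ (2,2)`.  In the affine group of `V` (realized as the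
group of affine self-equivalences of `V`), the subgroups `V ⋊ H` and `V ⋊ H'` — where `H` is
the `GL(V)`-stabilizer of a nonzero vector `v₀` and `H'` that of a nonzero functional `φ`, so
that `V ⋊ H = {f : f.linear v₀ = v₀}` and `V ⋊ H' = {f : φ ∘ f.linear = φ}` — are
Gassmann-Sunada equivalent but NOT jump equivalent. -/
theorem gassmannEquivalent_not_jumpEquivalent_affine {k : Type*} [Field k] [Fintype k]
    {q d : ℕ} (hq : Fintype.card k = q)
    {V : Type*} [AddCommGroup V] [Module k V] [FiniteDimensional k V]
    (hd : Module.finrank k V = d) (hd2 : 2 ≤ d) (hqd : ¬(q = 2 ∧ d = 2))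
    (v₀ : V) (hv₀ : v₀ ≠ 0) (φ : V →ₗ[k] k) (hφ : φ ≠ 0)
    (A A' : Subgroup (V ≃ᵃ[k] V))
    (hA : ∀ f : V ≃ᵃ[k] V, f ∈ A ↔ f.linear v₀ = v₀)
    (hA' : ∀ f : V ≃ᵃ[k] V, f ∈ A' ↔ ∀ x : V, φ (f.linear x) = φ x) :
    GassmannEquivalent A A' ∧ ¬ JumpEquivalent A A' := by
  classical
  haveI : Finite V := Module.finite_of_finite k
  haveI : Finite (V ≃ᵃ[k] V) := Finite.of_injective (fun f => (⇑f : V → V))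
    (fun a b h => AffineEquiv.ext (congrFun h))
  constructor
  · -- Gassmann equivalence
    apply gassmann_of_conjcount
    intro g
    have h1 : Nat.card {x : V ≃ᵃ[k] V // x * g * x⁻¹ ∈ A}
        = Nat.card {x : V ≃ᵃ[k] V // (x * g * x⁻¹).linear v₀ = v₀} :=
      Nat.card_congr (Equiv.subtypeEquivRight (fun x => hA _))
    have h2 : Nat.card {x : V ≃ᵃ[k] V // x * g * x⁻¹ ∈ A'}
        = Nat.card {x : V ≃ᵃ[k] V // ∀ y, φ ((x * g * x⁻¹).linear y) = φ y} :=
      Nat.card_congr (Equiv.subtypeEquivRight (fun x => hA' _))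
    rw [h1, h2]
    exact key_count v₀ hv₀ φ hφ g
  · -- not jump equivalent
    intro hJ
    set G := V ≃ᵃ[k] V
    set S : Set G := {f : G | ∃ x, f x = x} with hSdef
    set Tr : Set G := {f : G | f.linear = 1} with hTrdef
    set T : Set G := S ∪ Tr with hTdef
    have hconjS : ∀ (g f : G), f ∈ S → g * f * g⁻¹ ∈ S := by
      rintro g f ⟨x, hx⟩
      refine ⟨g x, ?_⟩
      show (g * f * g⁻¹) (g x) = g x
      have : (g * f * g⁻¹) (g x) = g (f (g⁻¹ (g x))) := rfl
      rw [this, show (g⁻¹ : G) (g x) = x from g.symm_apply_apply x, hx]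
    have hconjTr : ∀ (g f : G), f ∈ Tr → g * f * g⁻¹ ∈ Tr := by
      intro g f hf
      show (g * f * g⁻¹).linear = 1
      rw [show (g * f * g⁻¹).linear = g.linear * f.linear * (g.linear)⁻¹ from rfl, hf,
        mul_one, mul_inv_cancel]
    have hS : ConjStable S := by
      intro g
      ext f
      constructor
      · rintro ⟨a, ha, rfl⟩
        exact hconjS g a ha
      · intro hf
        refine ⟨g⁻¹ * f * g, by have h' := hconjS g⁻¹ f hf; rwa [inv_inv] at h', by group⟩
    have hT : ConjStable T := by
      intro g
      ext f
      constructor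
      · rintro ⟨a, ha, rfl⟩
        exact ha.elim (fun h => Or.inl (hconjS g a h)) (fun h => Or.inr (hconjTr g a h))
      · intro hf
        refine ⟨g⁻¹ * f * g, ?_, by group⟩
        exact hf.elim (fun h => Or.inl (by have h' := hconjS g⁻¹ f h; rwa [inv_inv] at h'))
          (fun h => Or.inr (by have h' := hconjTr g⁻¹ f h; rwa [inv_inv] at h'))
    -- translations are in the closure of A ∩ S
    have hTrsub : ∀ f : G, f ∈ Tr → f ∈ Subgroup.closure ((A : Set G) ∩ S) := by
      intro f hf
      have hflin : f.linear = 1 := hf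
      by_cases hb : f 0 = 0
      · have : f = 1 := AffineEquiv.ext fun v => by
          rw [affine_apply_eq, hflin, hb]
          simp
        rw [this]
        exact one_mem _
      · have hd2' : 2 ≤ finrank k V := by rw [hd]; exact hd2
        have hne' : ¬(Fintype.card k = 2 ∧ finrank k V = 2) := by
          rw [hq, hd]; exact hqd
        obtain ⟨ψ, hψv₀, hψne, hψb⟩ := exists_good_dual hd2' hne' hv₀ (f 0)
        obtain ⟨m, hm⟩ := exists_shear ψ (f 0) hψb
        have hmv₀ : m v₀ = v₀ := by rw [hm, hψv₀, zero_smul, sub_zero]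
        obtain ⟨u₀, hu₀⟩ : ∃ u₀ : V, ψ u₀ ≠ 0 := by
          by_contra hcc
          push_neg at hcc
          exact hψne (LinearMap.ext fun x => by rw [hcc x, LinearMap.zero_apply])
        set u : V := (ψ u₀)⁻¹ • u₀ with hu
        have hψu : ψ u = 1 := by
          rw [hu, map_smul, smul_eq_mul]
          field_simp
        set e₂ : G := m.toAffineEquiv with he₂
        set e₁ : G := m.toAffineEquiv.trans (AffineEquiv.constVAdd k V (f 0)) with he₁
        have he₂lin : e₂.linear = m := rfl
        have he₁lin : e₁.linear = m := LinearEquiv.ext fun x => rfl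
        have he₂A : e₂ ∈ A := (hA e₂).mpr (by rw [he₂lin]; exact hmv₀)
        have he₁A : e₁ ∈ A := (hA e₁).mpr (by rw [he₁lin]; exact hmv₀)
        have he₂S : e₂ ∈ S := ⟨0, by show m 0 = 0; exact map_zero m⟩
        have he₁S : e₁ ∈ S := by
          refine ⟨u, ?_⟩
          show f 0 +ᵥ m u = u
          rw [hm u, hψu, one_smul, vadd_eq_add]
          abel
        have hfe : f = e₁ * e₂⁻¹ := by
          apply AffineEquiv.ext
          intro v
          have hr : (e₁ * e₂⁻¹) v = f 0 +ᵥ m (m.symm v) := rfl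
          rw [hr, m.apply_symm_apply, vadd_eq_add, affine_apply_eq f v, hflin]
          show v + f 0 = f 0 + v
          abel
        rw [hfe]
        exact mul_mem (Subgroup.subset_closure ⟨he₁A, he₁S⟩)
          (inv_mem (Subgroup.subset_closure ⟨he₂A, he₂S⟩))
    -- the two closures for A agree
    have h1 : Subgroup.closure ((A : Set G) ∩ S) = Subgroup.closure ((A : Set G) ∩ T) := by
      apply le_antisymm
      · exact Subgroup.closure_mono
          (Set.inter_subset_inter_right _ Set.subset_union_left)
      · rw [Subgroup.closure_le]
        rintro f ⟨hfA, hfT⟩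
        rcases hfT with hfS | hfTr
        · exact Subgroup.subset_closure ⟨hfA, hfS⟩
        · exact hTrsub f hfTr
    have h2 := (hJ S T hS hT).mp h1
    -- the subgroup K bounding the closure of A' ∩ S
    let K : Subgroup G :=
      { carrier := {f : G | (∀ x, φ (f.linear x) = φ x) ∧ φ (f 0) = 0}
        one_mem' := ⟨fun x => rfl, by
          show φ ((1 : G) 0) = 0
          rw [show (1 : G) 0 = 0 from rfl, map_zero]⟩
        mul_mem' := by
          rintro a b ⟨ha1, ha2⟩ ⟨hb1, hb2⟩
          refine ⟨fun x => ?_, ?_⟩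
          · rw [show (a * b).linear = a.linear * b.linear from rfl, lmul_apply, ha1, hb1]
          · rw [show (a * b) 0 = a (b 0) from rfl, affine_apply_eq a (b 0), map_add, ha1,
              hb2, ha2, add_zero]
        inv_mem' := by
          rintro a ⟨ha1, ha2⟩
          constructor
          · intro x
            have := ha1 (a.linear.symm x)
            rw [a.linear.apply_symm_apply] at this
            exact this.symm
          · have h0 : a.linear ((a⁻¹ : G) 0) + a 0 = 0 := by
              rw [← affine_apply_eq]
              exact a.apply_symm_apply 0
            have h1' := congrArg φ h0
            rw [map_add φ, ha1, ha2, add_zero] at h1'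
            exact h1'.trans (map_zero φ) }
    have hKs : Subgroup.closure ((A' : Set G) ∩ S) ≤ K := by
      rw [Subgroup.closure_le]
      rintro f ⟨hfA', hfS⟩
      obtain ⟨x, hx⟩ := hfS
      refine ⟨(hA' f).mp hfA', ?_⟩
      have hh := congrArg φ (affine_apply_eq f x)
      rw [hx, map_add, (hA' f).mp hfA' x] at hh
      exact (left_eq_add.mp hh)
    -- the translation by v₁ with φ v₁ = 1
    obtain ⟨w₀, hw₀⟩ : ∃ w₀ : V, φ w₀ ≠ 0 := by
      by_contra hcc
      push_neg at hcc
      exact hφ (LinearMap.ext fun x => by rw [hcc x, LinearMap.zero_apply])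
    set v₁ : V := (φ w₀)⁻¹ • w₀ with hv₁def
    have hv₁ : φ v₁ = 1 := by
      rw [hv₁def, map_smul, smul_eq_mul]
      field_simp
    set t : G := AffineEquiv.constVAdd k V v₁ with ht
    have htlin : t.linear = 1 := rfl
    have htA' : t ∈ A' := (hA' t).mpr (fun x => by rw [htlin]; rfl)
    have htT : t ∈ T := Or.inr htlin
    have htcl : t ∈ Subgroup.closure ((A' : Set G) ∩ T) := Subgroup.subset_closure ⟨htA', htT⟩
    rw [← h2] at htcl
    have htK : t ∈ K := hKs htcl
    have ht0 : t 0 = v₁ := by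
      show v₁ +ᵥ (0 : V) = v₁
      simp
    have := htK.2
    rw [ht0, hv₁] at this
    exact one_ne_zero this
end
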